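/- arXiv:1701.01896 — 2 statements merged into one kernel-verified Lean document; each statement's English description precedes it below -/
import Mathlib

section
/- Let 0 < σ < 1/3, α ≥ 10/3 + σ, 0 < s < σ/40. There exist a constant C > 0 and N₀ ∈ ℕ such that for all N ≥ N₀, every eigen-data configuration of size N satisfying Condition R(N,s), and every real t in the interval L̂_α = [(α − 4/3 − 5s) log N/log δ₂^{−1}, (α − 4/3 + 6s) log N/log δ₂^{−1}], the function E_{IP,0} is differentiable at t and −E_{IP,0}′(t) ≥ C N^{−11s − 2/3 − α}. -/
open Finset MeasureTheory
open scoped Classical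

noncomputable section

/-- The Marchenko–Pastur density `ρ_d`. -/
def mpDensity (d x : ℝ) : ℝ :=
  if 0 < x then
    (1 / (2 * Real.pi * d)) *
      Real.sqrt (max (((1 + Real.sqrt d) ^ 2 - x) * (x - (1 - Real.sqrt d) ^ 2)) 0) / x
  else 0

/-- The quantile `γ_n`: the smallest `t` with `∫_{(-∞,t]} ρ_d = n/N`. -/
def mpQuantile (d : ℝ) (N n : ℕ) : ℝ :=
  sInf {t : ℝ | (∫ x in Set.Iic t, mpDensity d x) = (n : ℝ) / N}

/-- An eigen-data configuration of size `N`: eigenvalues `0 < λ₁ ≤ ⋯ ≤ λ_N` and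
nonnegative weights `β₁, …, β_N` with `β₁ > 0` and `∑ β_n² = 1`. -/
structure EigenData (N : ℕ) where
  lam : ℕ → ℝ
  beta : ℕ → ℝ
  lam_pos : 0 < lam 1
  lam_mono : ∀ m n, 1 ≤ m → m ≤ n → n ≤ N → lam m ≤ lam n
  beta_nonneg : ∀ n, 1 ≤ n → n ≤ N → 0 ≤ beta n
  beta_one_pos : 0 < beta 1
  beta_norm : ∑ n ∈ Finset.Icc 1 N, (beta n) ^ 2 = 1

namespace EigenData

variable {N : ℕ}

/-- `δ_n = λ₁²/λ_n²`. -/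
def δ (E : EigenData N) (n : ℕ) : ℝ := E.lam 1 ^ 2 / E.lam n ^ 2

/-- `Δ_n = λ_n - λ₁`. -/
def Δ (E : EigenData N) (n : ℕ) : ℝ := E.lam n - E.lam 1

/-- `ν_n = β_n²/β₁²`. -/
def ν (E : EigenData N) (n : ℕ) : ℝ := E.beta n ^ 2 / E.beta 1 ^ 2

/-- Condition R(N,s): delocalization, edge gaps and rigidity. -/
def CondR (d s : ℝ) (E : EigenData N) : Prop :=
  (∀ n ∈ Finset.Icc 1 N, E.beta n ≤ (N : ℝ) ^ (-1 / 2 + s / 2 : ℝ)) ∧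
  (∀ n ∈ ({1, 2, N - 1, N} : Set ℕ), (N : ℝ) ^ (-1 / 2 - s / 2 : ℝ) ≤ E.beta n) ∧
  (∀ n ∈ ({N - 1, N - 2} : Set ℕ),
    (N : ℝ) ^ (-2 / 3 - s / 2 : ℝ) ≤ E.lam N - E.lam n ∧
      E.lam N - E.lam n ≤ (N : ℝ) ^ (-2 / 3 + s / 2 : ℝ)) ∧
  (∀ n ∈ ({2, 3} : Set ℕ),
    (N : ℝ) ^ (-2 / 3 - s / 2 : ℝ) ≤ E.lam n - E.lam 1 ∧
      E.lam n - E.lam 1 ≤ (N : ℝ) ^ (-2 / 3 + s / 2 : ℝ)) ∧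
  (∀ n ∈ Finset.Icc 1 N, |E.lam n - mpQuantile d N n| ≤
    (N : ℝ) ^ (-2 / 3 + s / 2 : ℝ) * ((min n (N - n + 1) : ℕ) : ℝ) ^ (-1 / 3 : ℝ))

/-- Condition L(N,p): `λ₂/λ₃ < (λ₁/λ₂)^p`. -/
def CondL (p : ℝ) (E : EigenData N) : Prop :=
  E.lam 2 / E.lam 3 < (E.lam 1 / E.lam 2) ^ p

/-- The QR error function `E_QR(t)`. -/
def EQR (E : EigenData N) (t : ℝ) : ℝ :=
  (∑ n ∈ Finset.Icc 1 N, E.lam n ^ 2 * E.δ n ^ t * E.ν n) /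
      (∑ n ∈ Finset.Icc 1 N, E.δ n ^ t * E.ν n) -
    (∑ n ∈ Finset.Icc 1 N, E.lam n * E.δ n ^ t * E.ν n) ^ 2 /
      (∑ n ∈ Finset.Icc 1 N, E.δ n ^ t * E.ν n) ^ 2

/-- The QR halting time `T_{QR,ε} = inf {t ≥ 0 : E_QR(t) ≤ ε²}`. -/
def TQR (E : EigenData N) (ε : ℝ) : ℝ :=
  sInf {t : ℝ | 0 ≤ t ∧ E.EQR t ≤ ε ^ 2}

/-- The approximate QR halting time `T*_{QR,ε}` with `ε = N^{-α/2}`. -/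
def TstarQR (E : EigenData N) (α : ℝ) : ℝ :=
  (α * Real.log N + 2 * Real.log (E.Δ 2) + Real.log (E.ν 2)) / Real.log (E.δ 2)⁻¹

/-- The inverse power method iterate `λ_IP(t)`. -/
def lamIP (E : EigenData N) (t : ℝ) : ℝ :=
  (∑ n ∈ Finset.Icc 1 N, E.lam n ^ (-2 * t : ℝ) * E.beta n ^ 2) /
    (∑ n ∈ Finset.Icc 1 N, E.lam n ^ (-2 * t - 1 : ℝ) * E.beta n ^ 2)

/-- The inverse power method error `E_IP(t) = λ_IP(t+1)⁻¹ - λ_IP(t)⁻¹`. -/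
def EIP (E : EigenData N) (t : ℝ) : ℝ := (E.lamIP (t + 1))⁻¹ - (E.lamIP t)⁻¹

/-- The inverse power method halting time `T_{IP,ε} = inf {t ≥ 0 : E_IP(t) ≤ ε²}`. -/
def TIP (E : EigenData N) (ε : ℝ) : ℝ :=
  sInf {t : ℝ | 0 ≤ t ∧ E.EIP t ≤ ε ^ 2}

/-- The leading part `E_{IP,0}(t)` of the inverse power method error. -/
def EIP0 (E : EigenData N) (t : ℝ) : ℝ :=
  (∑ n ∈ Finset.Icc 2 N, (1 - E.δ n) * ((E.lam 1)⁻¹ - (E.lam n)⁻¹) * E.δ n ^ t * E.ν n) /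
    ((∑ n ∈ Finset.Icc 1 N, E.δ n ^ t * E.ν n) *
      (∑ n ∈ Finset.Icc 1 N, E.δ n ^ (t + 1) * E.ν n))

/-- The remainder `E_{IP,1}(t) = E_IP(t) - E_{IP,0}(t)`. -/
def EIP1 (E : EigenData N) (t : ℝ) : ℝ := E.EIP t - E.EIP0 t

/-- The approximate inverse power halting time `T*_{IP,ε}` with `ε = N^{-α/2}`. -/
def TstarIP (E : EigenData N) (α : ℝ) : ℝ :=
  (α * Real.log N + 2 * Real.log (1 - E.δ 2 ^ ((1 : ℝ) / 2)) +
      Real.log ((E.lam 2)⁻¹ + (E.lam 1)⁻¹) + Real.log (E.ν 2)) / Real.log (E.δ 2)⁻¹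

end EigenData

end
namespace MPaux

variable {d : ℝ}

lemma sqrt_lt_one (hd1 : d < 1) : Real.sqrt d < 1 :=
  (Real.sqrt_lt' one_pos).mpr (by linarith)

lemma lm_pos (hd1 : d < 1) : 0 < (1 - Real.sqrt d) ^ 2 := by
  have h := sqrt_lt_one hd1
  nlinarith

lemma lm_lt_lp (hd0 : 0 < d) : (1 - Real.sqrt d) ^ 2 < (1 + Real.sqrt d) ^ 2 := by
  have h : 0 < Real.sqrt d := Real.sqrt_pos.mpr hd0
  nlinarith

lemma mpDensity_nonneg (hd0 : 0 < d) (x : ℝ) : 0 ≤ mpDensity d x := by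
  unfold mpDensity
  split
  · rename_i hx
    have hpi : 0 < Real.pi := Real.pi_pos
    positivity
  · exact le_refl _

/-- density vanishes left of the left edge -/
lemma mpDensity_eq_zero_of_le (hd1 : d < 1) {x : ℝ} (hx : x ≤ (1 - Real.sqrt d) ^ 2) :
    mpDensity d x = 0 := by
  unfold mpDensity
  split
  · rename_i hx0
    have h1 : x - (1 - Real.sqrt d) ^ 2 ≤ 0 := by linarith
    have h2 : 0 ≤ (1 + Real.sqrt d) ^ 2 - x := by
      have := Real.sqrt_nonneg d
      nlinarith [lm_pos hd1]
    have : ((1 + Real.sqrt d) ^ 2 - x) * (x - (1 - Real.sqrt d) ^ 2) ≤ 0 :=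
      mul_nonpos_of_nonneg_of_nonpos h2 h1
    rw [max_eq_right this, Real.sqrt_zero, mul_zero, zero_div]
  · rfl

lemma mpDensity_eq_zero_of_ge {x : ℝ} (hx : (1 + Real.sqrt d) ^ 2 ≤ x) :
    mpDensity d x = 0 := by
  unfold mpDensity
  split
  · rename_i hx0
    have hsq := Real.sqrt_nonneg d
    have h2 : (1 + Real.sqrt d) ^ 2 - x ≤ 0 := by linarith
    have h1 : 0 ≤ x - (1 - Real.sqrt d) ^ 2 := by nlinarith
    have : ((1 + Real.sqrt d) ^ 2 - x) * (x - (1 - Real.sqrt d) ^ 2) ≤ 0 :=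
      mul_nonpos_of_nonpos_of_nonneg h2 h1
    rw [max_eq_right this, Real.sqrt_zero, mul_zero, zero_div]
  · rfl

lemma measurable_mpDensity (d : ℝ) : Measurable (mpDensity d) := by
  unfold mpDensity
  refine Measurable.ite (measurableSet_Ioi (a := (0:ℝ))) ?_ measurable_const
  have h1 : Continuous fun x : ℝ => (1 / (2 * Real.pi * d)) *
      Real.sqrt (max (((1 + Real.sqrt d) ^ 2 - x) * (x - (1 - Real.sqrt d) ^ 2)) 0) :=
    continuous_const.mul (Real.continuous_sqrt.comp
      (((continuous_const.sub continuous_id).mul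
        (continuous_id.sub continuous_const)).max continuous_const))
  exact h1.measurable.div measurable_id

/-- pointwise bound -/
lemma mpDensity_le (hd0 : 0 < d) (hd1 : d < 1) (x : ℝ) :
    mpDensity d x ≤ (1 / (2 * Real.pi * d)) * (1 + Real.sqrt d) ^ 2 / (1 - Real.sqrt d) ^ 2 := by
  have hpi := Real.pi_pos
  have hlm := lm_pos hd1
  have hlp : (0:ℝ) < (1 + Real.sqrt d) ^ 2 := lt_trans hlm (lm_lt_lp hd0)
  have hR : (0:ℝ) ≤ (1 / (2 * Real.pi * d)) * (1 + Real.sqrt d) ^ 2 / (1 - Real.sqrt d) ^ 2 := by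
    positivity
  rcases le_or_gt x ((1 - Real.sqrt d) ^ 2) with h | h
  · rw [mpDensity_eq_zero_of_le hd1 h]; exact hR
  rcases le_or_gt ((1 + Real.sqrt d) ^ 2) x with h2 | h2
  · rw [mpDensity_eq_zero_of_ge h2]; exact hR
  have hx0 : 0 < x := lt_trans hlm h
  unfold mpDensity
  rw [if_pos hx0]
  have hs : Real.sqrt (max (((1 + Real.sqrt d) ^ 2 - x) * (x - (1 - Real.sqrt d) ^ 2)) 0)
      ≤ (1 + Real.sqrt d) ^ 2 := by
    refine le_trans (Real.sqrt_le_sqrt (max_le ?_ (by positivity)))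
      (le_of_eq (Real.sqrt_sq hlp.le))
    nlinarith
  have hc : (0:ℝ) < 1 / (2 * Real.pi * d) := by positivity
  calc 1 / (2 * Real.pi * d) *
        Real.sqrt (max (((1 + Real.sqrt d) ^ 2 - x) * (x - (1 - Real.sqrt d) ^ 2)) 0) / x
      ≤ 1 / (2 * Real.pi * d) * (1 + Real.sqrt d) ^ 2 / (1 - Real.sqrt d) ^ 2 := by
        gcongr


lemma integrable_mpDensity (hd0 : 0 < d) (hd1 : d < 1) : Integrable (mpDensity d) := by
  set lm := (1 - Real.sqrt d) ^ 2
  set lp := (1 + Real.sqrt d) ^ 2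
  have hind : mpDensity d = (Set.Icc lm lp).indicator (mpDensity d) := by
    funext x
    by_cases hx : x ∈ Set.Icc lm lp
    · rw [Set.indicator_of_mem hx]
    · rw [Set.indicator_of_notMem hx]
      rcases lt_or_ge x lm with h | h
      · exact mpDensity_eq_zero_of_le hd1 h.le
      rcases le_or_gt x lp with h2 | h2
      · exact absurd (Set.mem_Icc.mpr ⟨h, h2⟩) hx
      · exact mpDensity_eq_zero_of_ge h2.le
  rw [hind]
  rw [integrable_indicator_iff measurableSet_Icc]
  apply Measure.integrableOn_of_bounded
  · exact (measure_Icc_lt_top).ne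
  · exact (measurable_mpDensity d).aestronglyMeasurable
  · refine Filter.Eventually.of_forall fun x => ?_
    rw [Real.norm_eq_abs, abs_of_nonneg (mpDensity_nonneg hd0 x)]
    exact mpDensity_le hd0 hd1 x


lemma F_eq_zero (hd1 : d < 1) {t : ℝ} (ht : t ≤ (1 - Real.sqrt d) ^ 2) :
    (∫ x in Set.Iic t, mpDensity d x) = 0 := by
  rw [MeasureTheory.setIntegral_congr_fun measurableSet_Iic
    (fun x hx => mpDensity_eq_zero_of_le hd1 (le_trans hx ht))]
  exact integral_zero _ _

lemma continuous_F (hd0 : 0 < d) (hd1 : d < 1) :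
    Continuous fun t => ∫ x in Set.Iic t, mpDensity d x := by
  have hint := integrable_mpDensity hd0 hd1
  have key : ∀ t : ℝ, (∫ x in Set.Iic t, mpDensity d x) =
      (∫ x in (0:ℝ)..t, mpDensity d x) + ∫ x in Set.Iic (0:ℝ), mpDensity d x := by
    intro t
    have := intervalIntegral.integral_Iic_sub_Iic (hint.integrableOn) (hint.integrableOn)
      (a := (0:ℝ)) (b := t)
    linarith
  rw [show (fun t => ∫ x in Set.Iic t, mpDensity d x) = fun t =>
      (∫ x in (0:ℝ)..t, mpDensity d x) + ∫ x in Set.Iic (0:ℝ), mpDensity d x from funext key]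
  exact (hint.continuous_primitive 0).add continuous_const

lemma F_lp_pos (hd0 : 0 < d) (hd1 : d < 1) :
    0 < ∫ x in Set.Iic ((1 + Real.sqrt d) ^ 2), mpDensity d x := by
  have hpi := Real.pi_pos
  have hlm := lm_pos hd1
  have hsd : 0 < Real.sqrt d := Real.sqrt_pos.mpr hd0
  set lm := (1 - Real.sqrt d) ^ 2 with hlmdef
  set lp := (1 + Real.sqrt d) ^ 2 with hlpdef
  have hlp : (0:ℝ) < lp := lt_trans hlm (lm_lt_lp hd0)
  set a := lm + Real.sqrt d with hadef
  set b := lp - Real.sqrt d with hbdef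
  have hgap : lp - lm = 4 * Real.sqrt d := by
    rw [hlmdef, hlpdef]; ring
  have hab : a ≤ b := by rw [hadef, hbdef]; nlinarith
  set c0 := (1 / (2 * Real.pi * d)) * Real.sqrt d / lp with hc0def
  have hc0 : 0 < c0 := by positivity
  have hint := integrable_mpDensity hd0 hd1
  have hlow : ∀ x ∈ Set.Icc a b, c0 ≤ mpDensity d x := by
    intro x hx
    obtain ⟨hxa, hxb⟩ := hx
    have hx0 : 0 < x := by
      have : lm < a := by rw [hadef]; linarith
      linarith
    have hxlp : x ≤ lp := by rw [hbdef] at hxb; linarith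
    unfold mpDensity
    rw [if_pos hx0]
    have hP : d ≤ (lp - x) * (x - lm) := by
      have h1 : Real.sqrt d ≤ lp - x := by rw [hbdef] at hxb; linarith
      have h2 : Real.sqrt d ≤ x - lm := by rw [hadef] at hxa; linarith
      calc d = Real.sqrt d * Real.sqrt d := (Real.mul_self_sqrt hd0.le).symm
        _ ≤ (lp - x) * (x - lm) := by nlinarith
    have hs : Real.sqrt d ≤ Real.sqrt (max ((lp - x) * (x - lm)) 0) :=
      Real.sqrt_le_sqrt (le_max_of_le_left hP)
    rw [hc0def]
    gcongr
  have step1 : c0 * (b - a) ≤ ∫ x in Set.Icc a b, mpDensity d x := by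
    have := MeasureTheory.setIntegral_mono_on
      (MeasureTheory.integrableOn_const measure_Icc_lt_top.ne)
      (hint.integrableOn) measurableSet_Icc hlow
    rw [MeasureTheory.setIntegral_const, Real.volume_real_Icc_of_le hab, smul_eq_mul] at this
    linarith
  have step2 : (∫ x in Set.Icc a b, mpDensity d x) ≤ ∫ x in Set.Iic lp, mpDensity d x := by
    apply MeasureTheory.setIntegral_mono_set hint.integrableOn
    · exact Filter.Eventually.of_forall fun x => mpDensity_nonneg hd0 x
    · refine (HasSubset.Subset.eventuallyLE ?_)
      intro x hx
      exact le_trans hx.2 (by rw [hbdef]; linarith)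
  have hba : 0 < b - a := by
    rw [hadef, hbdef]; nlinarith
  nlinarith

lemma quantile_le_lp (hd0 : 0 < d) (hd1 : d < 1) {N n : ℕ} (hn : 1 ≤ n) (hN : 1 ≤ N) :
    mpQuantile d N n ≤ (1 + Real.sqrt d) ^ 2 := by
  have hlm := lm_pos hd1
  set lm := (1 - Real.sqrt d) ^ 2 with hlmdef
  set lp := (1 + Real.sqrt d) ^ 2 with hlpdef
  have hlp : (0:ℝ) < lp := lt_trans hlm (lm_lt_lp hd0)
  have hpos : (0:ℝ) < (n:ℝ) / N := by
    apply div_pos (by exact_mod_cast hn) (by exact_mod_cast hN)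
  set S := {t : ℝ | (∫ x in Set.Iic t, mpDensity d x) = (n : ℝ) / N} with hSdef
  have hsub : ∀ t ∈ S, lm ≤ t := by
    intro t ht
    by_contra hlt
    push_neg at hlt
    have : (∫ x in Set.Iic t, mpDensity d x) = 0 := F_eq_zero hd1 hlt.le
    rw [hSdef] at ht
    simp only [Set.mem_setOf_eq] at ht
    rw [this] at ht
    linarith
  have hbdd : BddBelow S := ⟨lm, fun t ht => hsub t ht⟩
  rcases Set.eq_empty_or_nonempty S with hS | ⟨t₀, ht₀⟩
  · rw [mpQuantile, show {t : ℝ | (∫ x in Set.Iic t, mpDensity d x) = (n : ℝ) / N} = S from rfl,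
      hS, Real.sInf_empty]
    exact hlp.le
  · rcases le_or_gt t₀ lp with h | h
    · exact le_trans (csInf_le hbdd ht₀) h
    · have hlpS : lp ∈ S := by
        rw [hSdef]
        simp only [Set.mem_setOf_eq]
        have hint := integrable_mpDensity hd0 hd1
        have hdiff := intervalIntegral.integral_Iic_sub_Iic
          (hint.integrableOn (s := Set.Iic lp)) (hint.integrableOn (s := Set.Iic t₀))
        have hzero : (∫ x in lp..t₀, mpDensity d x) = 0 := by
          rw [intervalIntegral.integral_of_le h.le]
          rw [MeasureTheory.setIntegral_congr_fun measurableSet_Ioc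
            (fun x hx => mpDensity_eq_zero_of_ge hx.1.le)]
          exact integral_zero _ _
        rw [hSdef] at ht₀
        simp only [Set.mem_setOf_eq] at ht₀
        linarith
      exact csInf_le hbdd hlpS

lemma lm_le_quantile (hd0 : 0 < d) (hd1 : d < 1) {N n : ℕ} (hn : 1 ≤ n)
    (hub : (n:ℝ)/N ≤ ∫ x in Set.Iic ((1 + Real.sqrt d) ^ 2), mpDensity d x) (hN : 1 ≤ N) :
    (1 - Real.sqrt d) ^ 2 ≤ mpQuantile d N n := by
  have hlm := lm_pos hd1
  set lm := (1 - Real.sqrt d) ^ 2 with hlmdef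
  set lp := (1 + Real.sqrt d) ^ 2 with hlpdef
  have hlmlp : lm ≤ lp := (lm_lt_lp hd0).le
  have hpos : (0:ℝ) < (n:ℝ) / N := by
    apply div_pos (by exact_mod_cast hn) (by exact_mod_cast hN)
  set S := {t : ℝ | (∫ x in Set.Iic t, mpDensity d x) = (n : ℝ) / N} with hSdef
  have hsub : ∀ t ∈ S, lm ≤ t := by
    intro t ht
    by_contra hlt
    push_neg at hlt
    have : (∫ x in Set.Iic t, mpDensity d x) = 0 := F_eq_zero hd1 hlt.le
    rw [hSdef] at ht
    simp only [Set.mem_setOf_eq] at ht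
    rw [this] at ht
    linarith
  have hne : S.Nonempty := by
    have hc : ContinuousOn (fun t => ∫ x in Set.Iic t, mpDensity d x) (Set.Icc lm lp) :=
      (continuous_F hd0 hd1).continuousOn
    have hmem : (n:ℝ)/N ∈ Set.Icc ((∫ x in Set.Iic lm, mpDensity d x))
        (∫ x in Set.Iic lp, mpDensity d x) := by
      constructor
      · rw [F_eq_zero hd1 le_rfl]; exact hpos.le
      · exact hub
    obtain ⟨t, _, ht⟩ := intermediate_value_Icc hlmlp hc hmem
    exact ⟨t, ht⟩
  exact le_csInf hne (fun t ht => hsub t ht)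

end MPaux

lemma MPaux.exists_N0_rpow_le {c ε : ℝ} (hc : c < 0) (hε : 0 < ε) :
    ∃ N₀ : ℕ, ∀ N : ℕ, N₀ ≤ N → ((N : ℝ)) ^ c ≤ ε := by
  have h : Filter.Tendsto (fun N : ℕ => ((N : ℝ)) ^ c) Filter.atTop (nhds 0) := by
    have h0 := (tendsto_rpow_neg_atTop (show 0 < -c by linarith)).comp
      (tendsto_natCast_atTop_atTop (R := ℝ))
    simpa [Function.comp_def] using h0
  have h2 := h.eventually_le_const hε
  rw [Filter.eventually_atTop] at h2
  exact h2



lemma MPaux.key_ineq {a b c : ℝ} (ha : 0 < a) (hab : a < b) (hbc : b ≤ c) :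
    (b - a) * b ^ 2 ≤ (b ^ 2 - a ^ 2) * c := by
  have h1 : 0 ≤ b - a := by linarith
  have h2 : b ^ 2 ≤ (b + a) * c := by nlinarith
  calc (b - a) * b ^ 2 ≤ (b - a) * ((b + a) * c) := mul_le_mul_of_nonneg_left h2 h1
    _ = (b ^ 2 - a ^ 2) * c := by ring

lemma MPaux.cross_ineq {q0 q1 b0 b1 ell : ℝ} (hq0 : q0 ≤ ell / 8) (hq1 : q1 ≤ ell / 8)
    (hq0n : 0 ≤ q0) (hq1n : 0 ≤ q1) (hb0 : 1 ≤ b0) (hb0' : b0 ≤ 2) (hb1 : 1 ≤ b1)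
    (hb1' : b1 ≤ 2) (he : 0 ≤ ell) : q0 * b1 + b0 * q1 ≤ ell / 2 := by nlinarith

lemma MPaux.one_le_mul' {a b : ℝ} (ha : 1 ≤ a) (hb : 1 ≤ b) : 1 ≤ a * b := by nlinarith

set_option maxHeartbeats 1000000 in
/-- Derivative bound: given Condition R(N,s), for `t` in `L̂_α`, `E_{IP,0}` is
differentiable at `t` and `-E_{IP,0}'(t) ≥ C N^{-11s - 2/3 - α}`. -/
theorem EIP0_deriv_bound (d σ α s : ℝ)
    (hd0 : 0 < d) (hd1 : d < 1)
    (hσ0 : 0 < σ) (hσ1 : σ < 1 / 3)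
    (hα : 10 / 3 + σ ≤ α)
    (hs0 : 0 < s) (hs1 : s < σ / 40) :
    ∃ C > 0, ∃ N₀ : ℕ, ∀ N : ℕ, N₀ ≤ N → ∀ E : EigenData N, E.CondR d s →
      ∀ t ∈ Set.Icc ((α - 4 / 3 - 5 * s) * Real.log N / Real.log (E.δ 2)⁻¹)
          ((α - 4 / 3 + 6 * s) * Real.log N / Real.log (E.δ 2)⁻¹),
        DifferentiableAt ℝ E.EIP0 t ∧
          C * (N : ℝ) ^ (-11 * s - 2 / 3 - α) ≤ -deriv E.EIP0 t := by
  classical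
  -- edge constants
  set lm := (1 - Real.sqrt d) ^ 2 with hlmdef
  set lp := (1 + Real.sqrt d) ^ 2 with hlpdef
  have hlm : 0 < lm := MPaux.lm_pos hd1
  have hlp : 0 < lp := lt_trans hlm (MPaux.lm_lt_lp hd0)
  have hsd : 0 < Real.sqrt d := Real.sqrt_pos.mpr hd0
  have hsd1 : Real.sqrt d < 1 := MPaux.sqrt_lt_one hd1
  have hlm1 : lm < 1 := by rw [hlmdef]; nlinarith
  set K := lp + 1 with hKdef
  have hK1 : 1 < K := by rw [hKdef]; linarith
  have hK0 : 0 < K := lt_trans one_pos hK1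
  set k := lm / 2 with hkdef
  have hk0 : 0 < k := by rw [hkdef]; linarith
  have hk1 : k < 1 := by rw [hkdef]; linarith
  set Lbar := Real.log ((K / k) ^ 2) with hLbardef
  have hKk1 : 1 < (K / k) ^ 2 := by
    have h1 : 1 < K / k := (one_lt_div hk0).mpr (by linarith)
    nlinarith
  have hLbar0 : 0 < Lbar := Real.log_pos hKk1
  have hM0 : 0 < ∫ x in Set.Iic lp, mpDensity d x := MPaux.F_lp_pos hd0 hd1
  have hs120 : s < 1 / 120 := by linarith
  clear_value lm lp K k Lbar
  -- choose thresholds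
  obtain ⟨N₁, hN₁⟩ := MPaux.exists_N0_rpow_le (c := (-2 / 3 + s / 2 : ℝ))
    (by linarith) (lt_min hk0 one_pos)
  obtain ⟨N₂, hN₂⟩ := exists_nat_gt (1 / (∫ x in Set.Iic lp, mpDensity d x))
  obtain ⟨N₃, hN₃⟩ := MPaux.exists_N0_rpow_le (c := (3 + 13 * s / 2 - α : ℝ))
    (by linarith) (show (0:ℝ) < 1 / (4 * K) / Lbar by positivity)
  refine ⟨1 / (16 * K ^ 4), by positivity, max (max N₁ N₂) (max N₃ 3), ?_⟩
  intro N hN E hR t ht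
  have hNN₁ : N₁ ≤ N := le_trans (le_trans (le_max_left _ _) (le_max_left _ _)) hN
  have hNN₂ : N₂ ≤ N := le_trans (le_trans (le_max_right _ _) (le_max_left _ _)) hN
  have hNN₃ : N₃ ≤ N := le_trans (le_trans (le_max_left _ _) (le_max_right _ _)) hN
  have hN3 : 3 ≤ N := le_trans (le_trans (le_max_right _ _) (le_max_right _ _)) hN
  have hN1 : 1 ≤ N := by omega
  have hN2 : 2 ≤ N := by omega
  have hN0' : (0:ℝ) < N := by exact_mod_cast Nat.pos_of_ne_zero (by omega)
  have hN1R : (1:ℝ) ≤ N := by exact_mod_cast hN1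
  have hlogN : 0 ≤ Real.log N := Real.log_nonneg hN1R
  obtain ⟨hRi, hRii, hRiii, hRiv, hRv⟩ := hR
  have h1mem : (1:ℕ) ∈ Finset.Icc 1 N := Finset.mem_Icc.mpr ⟨le_rfl, hN1⟩
  have h2mem : (2:ℕ) ∈ Finset.Icc 1 N := Finset.mem_Icc.mpr ⟨by omega, hN2⟩
  have h2mem' : (2:ℕ) ∈ Finset.Icc 2 N := Finset.mem_Icc.mpr ⟨le_rfl, hN2⟩
  -- rigidity gives eigenvalue bounds
  have hrig : ∀ n ∈ Finset.Icc 1 N, |E.lam n - mpQuantile d N n| ≤ min k 1 := by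
    intro n hn
    obtain ⟨hn1, hnN⟩ := Finset.mem_Icc.mp hn
    refine le_trans (le_trans (hRv n hn) ?_) (hN₁ N hNN₁)
    have hmin : (1:ℝ) ≤ ((min n (N - n + 1) : ℕ) : ℝ) := by
      have : 1 ≤ min n (N - n + 1) := le_min hn1 (by omega)
      exact_mod_cast this
    have h2 : ((min n (N - n + 1) : ℕ) : ℝ) ^ (-1 / 3 : ℝ) ≤ 1 :=
      Real.rpow_le_one_of_one_le_of_nonpos hmin (by norm_num)
    calc (N:ℝ) ^ (-2 / 3 + s / 2 : ℝ) * ((min n (N - n + 1) : ℕ) : ℝ) ^ (-1 / 3 : ℝ)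
        ≤ (N:ℝ) ^ (-2 / 3 + s / 2 : ℝ) * 1 := by
          apply mul_le_mul_of_nonneg_left h2 (Real.rpow_nonneg hN0'.le _)
      _ = (N:ℝ) ^ (-2 / 3 + s / 2 : ℝ) := mul_one _
  have hlamub : ∀ n ∈ Finset.Icc 1 N, E.lam n ≤ K := by
    intro n hn
    have h1 := (abs_le.mp (hrig n hn)).2
    have h2 : mpQuantile d N n ≤ lp := by
      rw [hlpdef]; exact MPaux.quantile_le_lp hd0 hd1 (Finset.mem_Icc.mp hn).1 hN1
    have h3 : min k 1 ≤ 1 := min_le_right _ _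
    rw [hKdef]; linarith
  have hlam1lb : k ≤ E.lam 1 := by
    have h1 := (abs_le.mp (hrig 1 h1mem)).1
    have hub : (1:ℝ) / N ≤ ∫ x in Set.Iic lp, mpDensity d x := by
      have hcast : (N₂ : ℝ) ≤ N := by exact_mod_cast hNN₂
      have h1M : 1 / (∫ x in Set.Iic lp, mpDensity d x) < (N:ℝ) := lt_of_lt_of_le hN₂ hcast
      rw [div_le_iff₀ hN0']
      rw [div_lt_iff₀ hM0] at h1M
      linarith [mul_comm ((N:ℝ)) (∫ x in Set.Iic lp, mpDensity d x)]
    have h2 : lm ≤ mpQuantile d N 1 := by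
      rw [hlmdef]
      exact MPaux.lm_le_quantile hd0 hd1 (le_refl 1)
        (by rw [← hlpdef]; simpa using hub) hN1
    have h3 : min k 1 ≤ k := min_le_left _ _
    rw [hkdef] at *; linarith
  -- basic eigenvalue facts
  have hl1 : 0 < E.lam 1 := E.lam_pos
  have hlampos : ∀ n ∈ Finset.Icc 1 N, 0 < E.lam n := fun n hn =>
    lt_of_lt_of_le hl1 (E.lam_mono 1 n le_rfl (Finset.mem_Icc.mp hn).1 (Finset.mem_Icc.mp hn).2)
  have hl2 : 0 < E.lam 2 := hlampos 2 h2mem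
  have hgap := hRiv 2 (Set.mem_insert _ _)
  have hGpos : (0:ℝ) < (N:ℝ) ^ (-2 / 3 - s / 2 : ℝ) := Real.rpow_pos_of_pos hN0' _
  have hl12 : E.lam 1 < E.lam 2 := by linarith [hgap.1]
  have hδ2pos : 0 < E.δ 2 := by
    rw [EigenData.δ]; exact div_pos (pow_pos hl1 2) (pow_pos hl2 2)
  have hδ2lt1 : E.δ 2 < 1 := by
    rw [EigenData.δ, div_lt_one (pow_pos hl2 2)]
    exact pow_lt_pow_left₀ hl12 hl1.le (by norm_num)
  set ell := Real.log (E.δ 2)⁻¹ with helldef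
  have hell0 : 0 < ell := Real.log_pos ((one_lt_inv₀ hδ2pos).mpr hδ2lt1)
  clear_value ell
  -- general n facts
  have hδpos : ∀ n ∈ Finset.Icc 1 N, 0 < E.δ n := by
    intro n hn; rw [EigenData.δ]
    exact div_pos (pow_pos hl1 2) (pow_pos (hlampos n hn) 2)
  have hδle1 : ∀ n ∈ Finset.Icc 1 N, E.δ n ≤ 1 := by
    intro n hn; rw [EigenData.δ, div_le_one (pow_pos (hlampos n hn) 2)]
    have h := E.lam_mono 1 n le_rfl (Finset.mem_Icc.mp hn).1 (Finset.mem_Icc.mp hn).2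
    exact pow_le_pow_left₀ hl1.le h 2
  have hsub21 : ∀ n ∈ Finset.Icc 2 N, n ∈ Finset.Icc 1 N := by
    intro n hn; rw [Finset.mem_Icc] at *; omega
  have hδleδ2 : ∀ n ∈ Finset.Icc 2 N, E.δ n ≤ E.δ 2 := by
    intro n hn
    have h2n : E.lam 2 ≤ E.lam n := E.lam_mono 2 n (by omega) (Finset.mem_Icc.mp hn).1
      (Finset.mem_Icc.mp hn).2
    rw [EigenData.δ, EigenData.δ]
    apply div_le_div_of_nonneg_left (pow_pos hl1 2).le (pow_pos hl2 2)
    exact pow_le_pow_left₀ hl2.le h2n 2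
  have hν : ∀ n, 0 ≤ E.ν n := by intro n; rw [EigenData.ν]; positivity
  have hβ1 : 0 < E.beta 1 := E.beta_one_pos
  have hν1 : E.ν 1 = 1 := by
    rw [EigenData.ν]; exact div_self (by positivity)
  have hδ1 : E.δ 1 = 1 := by
    rw [EigenData.δ]; exact div_self (by positivity)
  have hcnn : ∀ n ∈ Finset.Icc 1 N, 0 ≤ (1 - E.δ n) * ((E.lam 1)⁻¹ - (E.lam n)⁻¹) := by
    intro n hn
    apply mul_nonneg (by linarith [hδle1 n hn])
    have h := E.lam_mono 1 n le_rfl (Finset.mem_Icc.mp hn).1 (Finset.mem_Icc.mp hn).2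
    have := hlampos n hn
    have := inv_anti₀ hl1 h
    linarith
  have hLnn : ∀ n ∈ Finset.Icc 1 N, 0 ≤ Real.log (E.δ n)⁻¹ := by
    intro n hn
    apply Real.log_nonneg
    rw [one_le_inv_iff₀]
    exact ⟨hδpos n hn, hδle1 n hn⟩
  have hLle : ∀ n ∈ Finset.Icc 1 N, Real.log (E.δ n)⁻¹ ≤ Lbar := by
    intro n hn
    rw [hLbardef]
    apply Real.log_le_log (inv_pos.mpr (hδpos n hn))
    rw [EigenData.δ, inv_div, div_pow]
    exact div_le_div₀ (by positivity) (pow_le_pow_left₀ (hlampos n hn).le (hlamub n hn) 2)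
      (pow_pos hk0 2) (pow_le_pow_left₀ hk0.le hlam1lb 2)
  have hLge : ∀ n ∈ Finset.Icc 2 N, ell ≤ Real.log (E.δ n)⁻¹ := by
    intro n hn
    rw [helldef]
    apply Real.log_le_log (by positivity)
    exact inv_anti₀ (hδpos n (hsub21 n hn)) (hδleδ2 n hn)
  -- t facts
  obtain ⟨ht1, ht2⟩ := Set.mem_Icc.mp ht
  have htell1 : (α - 4 / 3 - 5 * s) * Real.log N ≤ t * ell := by
    exact (div_le_iff₀ hell0).mp ht1
  have htell2 : t * ell ≤ (α - 4 / 3 + 6 * s) * Real.log N := by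
    exact (le_div_iff₀ hell0).mp ht2
  have ht0 : 0 ≤ t := by
    refine le_trans ?_ ht1
    apply div_nonneg (mul_nonneg (by linarith) hlogN) hell0.le
  -- rpow bounds for δ₂ ^ t
  have hδ2t_ub : E.δ 2 ^ t ≤ (N:ℝ) ^ (4 / 3 + 5 * s - α : ℝ) := by
    rw [Real.rpow_def_of_pos hδ2pos, Real.rpow_def_of_pos hN0']
    apply Real.exp_le_exp.mpr
    have hlogδ : Real.log (E.δ 2) = -ell := by rw [helldef, Real.log_inv]; ring
    rw [hlogδ]
    have expand : Real.log ↑N * (4 / 3 + 5 * s - α) = -((α - 4 / 3 - 5 * s) * Real.log N) := by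
      ring
    rw [expand]
    linarith [htell1]
  have hδ2t_lb : (N:ℝ) ^ (4 / 3 - 6 * s - α : ℝ) ≤ E.δ 2 ^ t := by
    rw [Real.rpow_def_of_pos hδ2pos, Real.rpow_def_of_pos hN0']
    apply Real.exp_le_exp.mpr
    have hlogδ : Real.log (E.δ 2) = -ell := by rw [helldef, Real.log_inv]; ring
    rw [hlogδ]
    have expand : Real.log ↑N * (4 / 3 - 6 * s - α) = -((α - 4 / 3 + 6 * s) * Real.log N) := by
      ring
    rw [expand]
    linarith [htell2]
  have hterm : ∀ n ∈ Finset.Icc 2 N, ∀ u : ℝ, t ≤ u → E.δ n ^ u ≤ E.δ 2 ^ t := by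
    intro n hn u hu
    calc E.δ n ^ u ≤ E.δ n ^ t :=
          Real.rpow_le_rpow_of_exponent_ge (hδpos n (hsub21 n hn)) (hδle1 n (hsub21 n hn)) hu
      _ ≤ E.δ 2 ^ t := Real.rpow_le_rpow (hδpos n (hsub21 n hn)).le (hδleδ2 n hn) ht0
  -- weight sums
  have hβ1lb : (N:ℝ) ^ (-1 / 2 - s / 2 : ℝ) ≤ E.beta 1 := hRii 1 (Set.mem_insert _ _)
  have hβ2lb : (N:ℝ) ^ (-1 / 2 - s / 2 : ℝ) ≤ E.beta 2 :=
    hRii 2 (Set.mem_insert_of_mem _ (Set.mem_insert _ _))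
  have hβ1ub : E.beta 1 ≤ (N:ℝ) ^ (-1 / 2 + s / 2 : ℝ) := hRi 1 h1mem
  have hsq : ((N:ℝ) ^ (-1 / 2 - s / 2 : ℝ)) ^ 2 = (N:ℝ) ^ (-1 - s : ℝ) := by
    rw [sq, ← Real.rpow_add hN0']
    congr 1; ring
  have hsq2 : ((N:ℝ) ^ (-1 / 2 + s / 2 : ℝ)) ^ 2 = (N:ℝ) ^ (-1 + s : ℝ) := by
    rw [sq, ← Real.rpow_add hN0']
    congr 1; ring
  have hβ1sq_lb : (N:ℝ) ^ (-1 - s : ℝ) ≤ E.beta 1 ^ 2 := by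
    rw [← hsq]; exact pow_le_pow_left₀ (Real.rpow_nonneg hN0'.le _) hβ1lb 2
  have hβ2sq_lb : (N:ℝ) ^ (-1 - s : ℝ) ≤ E.beta 2 ^ 2 := by
    rw [← hsq]; exact pow_le_pow_left₀ (Real.rpow_nonneg hN0'.le _) hβ2lb 2
  have hβ1sq_ub : E.beta 1 ^ 2 ≤ (N:ℝ) ^ (-1 + s : ℝ) := by
    rw [← hsq2]; exact pow_le_pow_left₀ hβ1.le hβ1ub 2
  have hνsum : ∑ n ∈ Finset.Icc 1 N, E.ν n ≤ (N:ℝ) ^ (1 + s : ℝ) := by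
    have h1 : ∑ n ∈ Finset.Icc 1 N, E.ν n = 1 / E.beta 1 ^ 2 := by
      simp only [EigenData.ν]
      rw [← Finset.sum_div, E.beta_norm]
    rw [h1]
    rw [div_le_iff₀ (by positivity)]
    calc (1:ℝ) = (N:ℝ) ^ (1 + s : ℝ) * (N:ℝ) ^ (-1 - s : ℝ) := by
          rw [← Real.rpow_add hN0', show (1 + s) + (-1 - s) = (0:ℝ) by ring, Real.rpow_zero]
      _ ≤ (N:ℝ) ^ (1 + s : ℝ) * E.beta 1 ^ 2 := by
          apply mul_le_mul_of_nonneg_left hβ1sq_lb (Real.rpow_nonneg hN0'.le _)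
  have hν2lb : (N:ℝ) ^ (-2 * s : ℝ) ≤ E.ν 2 := by
    rw [EigenData.ν]
    have : (N:ℝ) ^ (-2 * s : ℝ) = (N:ℝ) ^ (-1 - s : ℝ) / (N:ℝ) ^ (-1 + s : ℝ) := by
      rw [← Real.rpow_sub hN0']; congr 1; ring
    rw [this]
    exact div_le_div₀ (by positivity) hβ2sq_lb (by positivity) hβ1sq_ub
  -- the B function and bounds
  have hsplit : Finset.Icc 1 N = insert 1 (Finset.Icc 2 N) := by
    ext m; simp only [Finset.mem_Icc, Finset.mem_insert]; omega
  have h1notin : (1:ℕ) ∉ Finset.Icc 2 N := by simp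
  have hrest : ∀ u : ℝ, t ≤ u →
      (∑ n ∈ Finset.Icc 2 N, E.δ n ^ u * E.ν n) ≤ E.δ 2 ^ t * (N:ℝ) ^ (1 + s : ℝ) := by
    intro u hu
    calc (∑ n ∈ Finset.Icc 2 N, E.δ n ^ u * E.ν n)
        ≤ ∑ n ∈ Finset.Icc 2 N, E.δ 2 ^ t * E.ν n := by
          apply Finset.sum_le_sum
          intro n hn
          exact mul_le_mul_of_nonneg_right (hterm n hn u hu) (hν n)
      _ = E.δ 2 ^ t * ∑ n ∈ Finset.Icc 2 N, E.ν n := by rw [Finset.mul_sum]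
      _ ≤ E.δ 2 ^ t * ∑ n ∈ Finset.Icc 1 N, E.ν n := by
          apply mul_le_mul_of_nonneg_left _ (Real.rpow_nonneg hδ2pos.le _)
          apply Finset.sum_le_sum_of_subset_of_nonneg
          · intro m hm; exact hsub21 m hm
          · intro m _ _; exact hν m
      _ ≤ E.δ 2 ^ t * (N:ℝ) ^ (1 + s : ℝ) := by
          apply mul_le_mul_of_nonneg_left hνsum (Real.rpow_nonneg hδ2pos.le _)
  have hδ2tN : E.δ 2 ^ t * (N:ℝ) ^ (1 + s : ℝ) ≤ (N:ℝ) ^ (7 / 3 + 6 * s - α : ℝ) := by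
    calc E.δ 2 ^ t * (N:ℝ) ^ (1 + s : ℝ)
        ≤ (N:ℝ) ^ (4 / 3 + 5 * s - α : ℝ) * (N:ℝ) ^ (1 + s : ℝ) :=
          mul_le_mul_of_nonneg_right hδ2t_ub (Real.rpow_nonneg hN0'.le _)
      _ = (N:ℝ) ^ (7 / 3 + 6 * s - α : ℝ) := by
          rw [← Real.rpow_add hN0']; congr 1; ring
  have hNexp1 : (N:ℝ) ^ (7 / 3 + 6 * s - α : ℝ) ≤ 1 :=
    Real.rpow_le_one_of_one_le_of_nonpos hN1R (by linarith)
  have hB_upper : ∀ u : ℝ, t ≤ u → (∑ n ∈ Finset.Icc 1 N, E.δ n ^ u * E.ν n) ≤ 2 := by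
    intro u hu
    rw [hsplit, Finset.sum_insert h1notin, hδ1, Real.one_rpow, hν1]
    have := le_trans (hrest u hu) (le_trans hδ2tN hNexp1)
    linarith
  have hB_lower : ∀ u : ℝ, 1 ≤ (∑ n ∈ Finset.Icc 1 N, E.δ n ^ u * E.ν n) := by
    intro u
    have h1 : E.δ 1 ^ u * E.ν 1 = 1 := by rw [hδ1, Real.one_rpow, hν1, one_mul]
    rw [← h1]
    exact Finset.single_le_sum (f := fun n => E.δ n ^ u * E.ν n)
      (fun n hn => mul_nonneg (Real.rpow_nonneg (hδpos n hn).le _) (hν n)) h1mem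
  -- ell lower bound
  have hell_lb : 2 * (N:ℝ) ^ (-2 / 3 - s / 2 : ℝ) / K ≤ ell := by
    have hratio : (E.δ 2)⁻¹ = (E.lam 2 / E.lam 1) ^ 2 := by
      rw [EigenData.δ, inv_div, div_pow]
    have h1 : ell = 2 * Real.log (E.lam 2 / E.lam 1) := by
      rw [helldef, hratio, Real.log_pow]; push_cast; ring
    have h2 : 1 - (E.lam 2 / E.lam 1)⁻¹ ≤ Real.log (E.lam 2 / E.lam 1) :=
      Real.one_sub_inv_le_log_of_pos (by positivity)
    have h3 : (E.lam 2 / E.lam 1)⁻¹ = E.lam 1 / E.lam 2 := by rw [inv_div]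
    have h4 : (N:ℝ) ^ (-2 / 3 - s / 2 : ℝ) / K ≤ 1 - E.lam 1 / E.lam 2 := by
      have he : 1 - E.lam 1 / E.lam 2 = (E.lam 2 - E.lam 1) / E.lam 2 := by
        field_simp
      rw [he]
      exact div_le_div₀ (by linarith [hl12]) hgap.1 hl2 (hlamub 2 h2mem)
    rw [h1]
    rw [h3] at h2
    have h5 := le_trans h4 h2
    calc 2 * (N:ℝ) ^ (-2 / 3 - s / 2 : ℝ) / K
        = 2 * ((N:ℝ) ^ (-2 / 3 - s / 2 : ℝ) / K) := by ring
      _ ≤ 2 * Real.log (E.lam 2 / E.lam 1) := by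
          apply mul_le_mul_of_nonneg_left h5 (by norm_num)
  -- βic bound
  have hq_bound : ∀ u : ℝ, t ≤ u →
      (∑ n ∈ Finset.Icc 1 N, Real.log (E.δ n)⁻¹ * E.δ n ^ u * E.ν n) ≤ ell / 8 := by
    intro u hu
    have hstep : (∑ n ∈ Finset.Icc 1 N, Real.log (E.δ n)⁻¹ * E.δ n ^ u * E.ν n)
        ≤ Lbar * (E.δ 2 ^ t * (N:ℝ) ^ (1 + s : ℝ)) := by
      calc (∑ n ∈ Finset.Icc 1 N, Real.log (E.δ n)⁻¹ * E.δ n ^ u * E.ν n)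
          ≤ ∑ n ∈ Finset.Icc 1 N, Lbar * (E.δ 2 ^ t * E.ν n) := by
            apply Finset.sum_le_sum
            intro n hn
            rcases eq_or_lt_of_le (Finset.mem_Icc.mp hn).1 with h1 | h1
            · rw [← h1, hδ1]
              simp only [inv_one, Real.log_one, zero_mul]
              exact mul_nonneg hLbar0.le
                (mul_nonneg (Real.rpow_nonneg hδ2pos.le _) (hν 1))
            · have hn2 : n ∈ Finset.Icc 2 N := Finset.mem_Icc.mpr ⟨h1, (Finset.mem_Icc.mp hn).2⟩
              rw [mul_assoc, ← mul_assoc (Real.log (E.δ n)⁻¹)]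
              calc Real.log (E.δ n)⁻¹ * E.δ n ^ u * E.ν n
                  ≤ Lbar * (E.δ 2 ^ t) * E.ν n := by
                    apply mul_le_mul_of_nonneg_right _ (hν n)
                    apply mul_le_mul (hLle n hn) (hterm n hn2 u hu)
                      (Real.rpow_nonneg (hδpos n hn).le _) hLbar0.le
                _ = Lbar * (E.δ 2 ^ t * E.ν n) := by ring
        _ = Lbar * (E.δ 2 ^ t * ∑ n ∈ Finset.Icc 1 N, E.ν n) := by
            simp only [← Finset.mul_sum]
        _ ≤ Lbar * (E.δ 2 ^ t * (N:ℝ) ^ (1 + s : ℝ)) := by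
            apply mul_le_mul_of_nonneg_left _ hLbar0.le
            exact mul_le_mul_of_nonneg_left hνsum (Real.rpow_nonneg hδ2pos.le _)
    have hstep2 : Lbar * (E.δ 2 ^ t * (N:ℝ) ^ (1 + s : ℝ))
        ≤ 1 / (4 * K) * (N:ℝ) ^ (-2 / 3 - s / 2 : ℝ) := by
      have h5 := hN₃ N hNN₃
      have hsplitexp : (N:ℝ) ^ (7 / 3 + 6 * s - α : ℝ)
          = (N:ℝ) ^ (3 + 13 * s / 2 - α : ℝ) * (N:ℝ) ^ (-2 / 3 - s / 2 : ℝ) := by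
        rw [← Real.rpow_add hN0']; congr 1; ring
      calc Lbar * (E.δ 2 ^ t * (N:ℝ) ^ (1 + s : ℝ))
          ≤ Lbar * (N:ℝ) ^ (7 / 3 + 6 * s - α : ℝ) :=
            mul_le_mul_of_nonneg_left hδ2tN hLbar0.le
        _ = Lbar * (N:ℝ) ^ (3 + 13 * s / 2 - α : ℝ) * (N:ℝ) ^ (-2 / 3 - s / 2 : ℝ) := by
            rw [hsplitexp]; ring
        _ ≤ 1 / (4 * K) * (N:ℝ) ^ (-2 / 3 - s / 2 : ℝ) := by
            apply mul_le_mul_of_nonneg_right _ (Real.rpow_nonneg hN0'.le _)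
            calc Lbar * (N:ℝ) ^ (3 + 13 * s / 2 - α : ℝ)
                ≤ Lbar * (1 / (4 * K) / Lbar) := mul_le_mul_of_nonneg_left h5 hLbar0.le
              _ = 1 / (4 * K) := by
                rw [mul_comm, div_mul_cancel₀ _ (ne_of_gt hLbar0)]
    have hstep3 : 1 / (4 * K) * (N:ℝ) ^ (-2 / 3 - s / 2 : ℝ) ≤ ell / 8 := by
      have : 1 / (4 * K) * (N:ℝ) ^ (-2 / 3 - s / 2 : ℝ)
          = (2 * (N:ℝ) ^ (-2 / 3 - s / 2 : ℝ) / K) / 8 := by ring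
      rw [this]
      linarith [hell_lb]
    linarith
  -- gap-based lower bounds for the main term
  have hΔlb : (N:ℝ) ^ (-2 / 3 - s / 2 : ℝ) ≤ E.lam 2 - E.lam 1 := hgap.1
  have h1δ : (N:ℝ) ^ (-2 / 3 - s / 2 : ℝ) / K ≤ 1 - E.δ 2 := by
    have key : (E.lam 2 - E.lam 1) * E.lam 2 ^ 2 ≤ (E.lam 2 ^ 2 - E.lam 1 ^ 2) * K :=
      MPaux.key_ineq hl1 hl12 (hlamub 2 h2mem)
    have he : 1 - E.δ 2 = (E.lam 2 ^ 2 - E.lam 1 ^ 2) / E.lam 2 ^ 2 := by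
      rw [EigenData.δ]; field_simp
    rw [he]
    calc (N:ℝ) ^ (-2 / 3 - s / 2 : ℝ) / K ≤ (E.lam 2 - E.lam 1) / K :=
          (div_le_div_iff_of_pos_right hK0).mpr hΔlb
      _ ≤ (E.lam 2 ^ 2 - E.lam 1 ^ 2) / E.lam 2 ^ 2 :=
          (div_le_div_iff₀ hK0 (pow_pos hl2 2)).mpr key
  have h2δ : (N:ℝ) ^ (-2 / 3 - s / 2 : ℝ) / K ^ 2 ≤ (E.lam 1)⁻¹ - (E.lam 2)⁻¹ := by
    have he : (E.lam 1)⁻¹ - (E.lam 2)⁻¹ = (E.lam 2 - E.lam 1) / (E.lam 1 * E.lam 2) := by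
      field_simp
    rw [he]
    have hKK : E.lam 1 * E.lam 2 ≤ K ^ 2 := by
      have := mul_le_mul (hlamub 1 h1mem) (hlamub 2 h2mem) hl2.le hK0.le
      calc E.lam 1 * E.lam 2 ≤ K * K := this
        _ = K ^ 2 := (sq K).symm
    exact div_le_div₀ (by linarith [hl12]) hΔlb (by positivity) hKK
  -- derivative construction
  have hAder : HasDerivAt
      (fun u : ℝ => ∑ n ∈ Finset.Icc 2 N,
        (1 - E.δ n) * ((E.lam 1)⁻¹ - (E.lam n)⁻¹) * E.δ n ^ u * E.ν n)
      (∑ n ∈ Finset.Icc 2 N,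
        (1 - E.δ n) * ((E.lam 1)⁻¹ - (E.lam n)⁻¹) * (E.δ n ^ t * Real.log (E.δ n)) * E.ν n)
      t := by
    apply HasDerivAt.fun_sum
    intro n hn
    exact (((Real.hasStrictDerivAt_const_rpow (hδpos n (hsub21 n hn)) t).hasDerivAt.const_mul
      ((1 - E.δ n) * ((E.lam 1)⁻¹ - (E.lam n)⁻¹))).mul_const (E.ν n))
  have hBder : HasDerivAt (fun u : ℝ => ∑ n ∈ Finset.Icc 1 N, E.δ n ^ u * E.ν n)
      (∑ n ∈ Finset.Icc 1 N, (E.δ n ^ t * Real.log (E.δ n)) * E.ν n) t := by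
    apply HasDerivAt.fun_sum
    intro n hn
    exact ((Real.hasStrictDerivAt_const_rpow (hδpos n hn) t).hasDerivAt.mul_const (E.ν n))
  have hB1der : HasDerivAt (fun u : ℝ => ∑ n ∈ Finset.Icc 1 N, E.δ n ^ (u + 1) * E.ν n)
      (∑ n ∈ Finset.Icc 1 N, (E.δ n ^ (t + 1) * Real.log (E.δ n)) * E.ν n) t := by
    apply HasDerivAt.fun_sum
    intro n hn
    have hcomp : HasDerivAt (fun u : ℝ => E.δ n ^ (u + 1))
        (E.δ n ^ (t + 1) * Real.log (E.δ n)) t := by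
      have h := (Real.hasStrictDerivAt_const_rpow (hδpos n hn) (t + 1)).hasDerivAt
      have h2 := h.comp t ((hasDerivAt_id t).add_const 1)
      simpa [Function.comp_def] using h2
    exact hcomp.mul_const (E.ν n)
  have hBne : (∑ n ∈ Finset.Icc 1 N, E.δ n ^ t * E.ν n) *
      (∑ n ∈ Finset.Icc 1 N, E.δ n ^ (t + 1) * E.ν n) ≠ 0 :=
    ne_of_gt (mul_pos (lt_of_lt_of_le one_pos (hB_lower t))
      (lt_of_lt_of_le one_pos (hB_lower (t + 1))))
  have hdiv := hAder.fun_div (hBder.fun_mul hB1der) hBne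
  have hEIP0eq : E.EIP0 = fun u : ℝ =>
      (∑ n ∈ Finset.Icc 2 N,
        (1 - E.δ n) * ((E.lam 1)⁻¹ - (E.lam n)⁻¹) * E.δ n ^ u * E.ν n) /
      ((∑ n ∈ Finset.Icc 1 N, E.δ n ^ u * E.ν n) *
        (∑ n ∈ Finset.Icc 1 N, E.δ n ^ (u + 1) * E.ν n)) := by
    funext u
    rfl
  have hdiff : DifferentiableAt ℝ E.EIP0 t := by
    rw [hEIP0eq]; exact hdiv.differentiableAt
  have hderiv := hdiv.deriv
  rw [← hEIP0eq] at hderiv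
  refine ⟨hdiff, ?_⟩
  -- name the pieces
  set b0 := ∑ n ∈ Finset.Icc 1 N, E.δ n ^ t * E.ν n with hb0def
  set b1 := ∑ n ∈ Finset.Icc 1 N, E.δ n ^ (t + 1) * E.ν n with hb1def
  set a0 := ∑ n ∈ Finset.Icc 2 N,
    (1 - E.δ n) * ((E.lam 1)⁻¹ - (E.lam n)⁻¹) * E.δ n ^ t * E.ν n with ha0def
  set p' := ∑ n ∈ Finset.Icc 2 N,
    (1 - E.δ n) * ((E.lam 1)⁻¹ - (E.lam n)⁻¹) * (E.δ n ^ t * Real.log (E.δ n)) * E.ν n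
    with hp'def
  set q0' := ∑ n ∈ Finset.Icc 1 N, (E.δ n ^ t * Real.log (E.δ n)) * E.ν n with hq0'def
  set q1' := ∑ n ∈ Finset.Icc 1 N, (E.δ n ^ (t + 1) * Real.log (E.δ n)) * E.ν n with hq1'def
  set p := ∑ n ∈ Finset.Icc 2 N,
    (1 - E.δ n) * ((E.lam 1)⁻¹ - (E.lam n)⁻¹) * (E.δ n ^ t * Real.log (E.δ n)⁻¹) * E.ν n
    with hpdef
  set q0 := ∑ n ∈ Finset.Icc 1 N, Real.log (E.δ n)⁻¹ * E.δ n ^ t * E.ν n with hq0def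
  set q1 := ∑ n ∈ Finset.Icc 1 N, Real.log (E.δ n)⁻¹ * E.δ n ^ (t + 1) * E.ν n with hq1def
  have hp'rel : p' = -p := by
    rw [hp'def, hpdef, ← Finset.sum_neg_distrib]
    apply Finset.sum_congr rfl
    intro n _
    rw [Real.log_inv]; ring
  have hq0'rel : q0' = -q0 := by
    rw [hq0'def, hq0def, ← Finset.sum_neg_distrib]
    apply Finset.sum_congr rfl
    intro n _
    rw [Real.log_inv]; ring
  have hq1'rel : q1' = -q1 := by
    rw [hq1'def, hq1def, ← Finset.sum_neg_distrib]
    apply Finset.sum_congr rfl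
    intro n _
    rw [Real.log_inv]; ring
  -- bounds on the pieces
  have hb0low : 1 ≤ b0 := by rw [hb0def]; exact hB_lower t
  have hb1low : 1 ≤ b1 := by rw [hb1def]; exact hB_lower (t + 1)
  have hb0up : b0 ≤ 2 := by rw [hb0def]; exact hB_upper t le_rfl
  have hb1up : b1 ≤ 2 := by rw [hb1def]; exact hB_upper (t + 1) (by linarith)
  have hq0small : q0 ≤ ell / 8 := by rw [hq0def]; exact hq_bound t le_rfl
  have hq1small : q1 ≤ ell / 8 := by rw [hq1def]; exact hq_bound (t + 1) (by linarith)
  have hq0nn : 0 ≤ q0 := by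
    rw [hq0def]
    apply Finset.sum_nonneg
    intro n hn
    exact mul_nonneg (mul_nonneg (hLnn n hn) (Real.rpow_nonneg (hδpos n hn).le _)) (hν n)
  have hq1nn : 0 ≤ q1 := by
    rw [hq1def]
    apply Finset.sum_nonneg
    intro n hn
    exact mul_nonneg (mul_nonneg (hLnn n hn) (Real.rpow_nonneg (hδpos n hn).le _)) (hν n)
  have ha0nn : 0 ≤ a0 := by
    rw [ha0def]
    apply Finset.sum_nonneg
    intro n hn
    exact mul_nonneg (mul_nonneg (hcnn n (hsub21 n hn))
      (Real.rpow_nonneg (hδpos n (hsub21 n hn)).le _)) (hν n)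
  have hpnn : 0 ≤ p := by
    rw [hpdef]
    apply Finset.sum_nonneg
    intro n hn
    apply mul_nonneg (mul_nonneg (hcnn n (hsub21 n hn)) _) (hν n)
    exact mul_nonneg (Real.rpow_nonneg (hδpos n (hsub21 n hn)).le _) (hLnn n (hsub21 n hn))
  have hAα : ell * a0 ≤ p := by
    rw [ha0def, hpdef, Finset.mul_sum]
    apply Finset.sum_le_sum
    intro n hn
    calc ell * ((1 - E.δ n) * ((E.lam 1)⁻¹ - (E.lam n)⁻¹) * E.δ n ^ t * E.ν n)
        = (1 - E.δ n) * ((E.lam 1)⁻¹ - (E.lam n)⁻¹) * (E.δ n ^ t * ell) * E.ν n := by ring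
      _ ≤ (1 - E.δ n) * ((E.lam 1)⁻¹ - (E.lam n)⁻¹) *
            (E.δ n ^ t * Real.log (E.δ n)⁻¹) * E.ν n := by
          apply mul_le_mul_of_nonneg_right _ (hν n)
          apply mul_le_mul_of_nonneg_left _ (hcnn n (hsub21 n hn))
          exact mul_le_mul_of_nonneg_left (hLge n hn)
            (Real.rpow_nonneg (hδpos n (hsub21 n hn)).le _)
  have hm2 : (1 - E.δ 2) * ((E.lam 1)⁻¹ - (E.lam 2)⁻¹) * (E.δ 2 ^ t * ell) * E.ν 2 ≤ p := by
    rw [hpdef, helldef]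
    apply Finset.single_le_sum (f := fun n =>
      (1 - E.δ n) * ((E.lam 1)⁻¹ - (E.lam n)⁻¹) * (E.δ n ^ t * Real.log (E.δ n)⁻¹) * E.ν n)
      _ h2mem'
    intro n hn
    apply mul_nonneg (mul_nonneg (hcnn n (hsub21 n hn)) _) (hν n)
    exact mul_nonneg (Real.rpow_nonneg (hδpos n (hsub21 n hn)).le _) (hLnn n (hsub21 n hn))
  have hcross : q0 * b1 + b0 * q1 ≤ ell / 2 :=
    MPaux.cross_ineq hq0small hq1small hq0nn hq1nn hb0low hb0up hb1low hb1up hell0.le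
  have hbb1 : 1 ≤ b0 * b1 := MPaux.one_le_mul' hb0low hb1low
  have hnum : p / 2 ≤ p * (b0 * b1) - a0 * (q0 * b1 + b0 * q1) := by
    have h6 : a0 * (q0 * b1 + b0 * q1) ≤ a0 * (ell / 2) := by
      apply mul_le_mul_of_nonneg_left hcross ha0nn
    have h7 : a0 * (ell / 2) ≤ p / 2 := by linarith [hAα]
    have h8 : p ≤ p * (b0 * b1) := le_mul_of_one_le_right hpnn hbb1
    linarith
  have hbbup : b0 * b1 ≤ 4 := by
    calc b0 * b1 ≤ 2 * 2 := mul_le_mul hb0up hb1up (by linarith) (by norm_num)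
      _ = 4 := by norm_num
  have hdensq : (b0 * b1) ^ 2 ≤ 16 := by
    have h := pow_le_pow_left₀ (by linarith : (0:ℝ) ≤ b0 * b1) hbbup 2
    norm_num at h
    exact h
  have hdenpos : 0 < (b0 * b1) ^ 2 := by positivity
  -- main term lower bound
  have hgprod1 : ((N:ℝ) ^ (-2 / 3 - s / 2 : ℝ) / K) * ((N:ℝ) ^ (-2 / 3 - s / 2 : ℝ) / K ^ 2)
      ≤ (1 - E.δ 2) * ((E.lam 1)⁻¹ - (E.lam 2)⁻¹) :=
    mul_le_mul h1δ h2δ (by positivity) (by linarith [hδ2lt1])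
  have hgprod2 : ((N:ℝ) ^ (4 / 3 - 6 * s - α : ℝ)) * (2 * (N:ℝ) ^ (-2 / 3 - s / 2 : ℝ) / K)
      ≤ E.δ 2 ^ t * ell :=
    mul_le_mul hδ2t_lb hell_lb (by positivity) (Real.rpow_nonneg hδ2pos.le _)
  have hgprod3 : (((N:ℝ) ^ (-2 / 3 - s / 2 : ℝ) / K) * ((N:ℝ) ^ (-2 / 3 - s / 2 : ℝ) / K ^ 2))
      * (((N:ℝ) ^ (4 / 3 - 6 * s - α : ℝ)) * (2 * (N:ℝ) ^ (-2 / 3 - s / 2 : ℝ) / K))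
      ≤ ((1 - E.δ 2) * ((E.lam 1)⁻¹ - (E.lam 2)⁻¹)) * (E.δ 2 ^ t * ell) :=
    mul_le_mul hgprod1 hgprod2 (by positivity) (hcnn 2 h2mem)
  have hgprod4 : ((((N:ℝ) ^ (-2 / 3 - s / 2 : ℝ) / K) * ((N:ℝ) ^ (-2 / 3 - s / 2 : ℝ) / K ^ 2))
      * (((N:ℝ) ^ (4 / 3 - 6 * s - α : ℝ)) * (2 * (N:ℝ) ^ (-2 / 3 - s / 2 : ℝ) / K)))
      * ((N:ℝ) ^ (-2 * s : ℝ))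
      ≤ (1 - E.δ 2) * ((E.lam 1)⁻¹ - (E.lam 2)⁻¹) * (E.δ 2 ^ t * ell) * E.ν 2 :=
    mul_le_mul hgprod3 hν2lb (by positivity)
      (mul_nonneg (hcnn 2 h2mem) (mul_nonneg (Real.rpow_nonneg hδ2pos.le _) hell0.le))
  have hpow : (N:ℝ) ^ (-2 / 3 - s / 2 : ℝ) * (N:ℝ) ^ (-2 / 3 - s / 2 : ℝ)
      * (N:ℝ) ^ (-2 / 3 - s / 2 : ℝ) * (N:ℝ) ^ (4 / 3 - 6 * s - α : ℝ)
      * (N:ℝ) ^ (-2 * s : ℝ) = (N:ℝ) ^ (-2 / 3 - α - 19 * s / 2 : ℝ) := by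
    rw [← Real.rpow_add hN0', ← Real.rpow_add hN0', ← Real.rpow_add hN0',
      ← Real.rpow_add hN0']
    congr 1; ring
  have hXeq : ((((N:ℝ) ^ (-2 / 3 - s / 2 : ℝ) / K) * ((N:ℝ) ^ (-2 / 3 - s / 2 : ℝ) / K ^ 2))
      * (((N:ℝ) ^ (4 / 3 - 6 * s - α : ℝ)) * (2 * (N:ℝ) ^ (-2 / 3 - s / 2 : ℝ) / K)))
      * ((N:ℝ) ^ (-2 * s : ℝ))
      = 2 * (N:ℝ) ^ (-2 / 3 - α - 19 * s / 2 : ℝ) / K ^ 4 := by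
    rw [← hpow]; ring
  -- final chain
  have hexp : (N:ℝ) ^ (-11 * s - 2 / 3 - α : ℝ) ≤ (N:ℝ) ^ (-2 / 3 - α - 19 * s / 2 : ℝ) :=
    Real.rpow_le_rpow_of_exponent_le hN1R (by linarith)
  have hfinal : 1 / (16 * K ^ 4) * (N:ℝ) ^ (-11 * s - 2 / 3 - α : ℝ)
      ≤ (p * (b0 * b1) - a0 * (q0 * b1 + b0 * q1)) / (b0 * b1) ^ 2 := by
    calc 1 / (16 * K ^ 4) * (N:ℝ) ^ (-11 * s - 2 / 3 - α : ℝ)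
        ≤ 1 / (16 * K ^ 4) * (N:ℝ) ^ (-2 / 3 - α - 19 * s / 2 : ℝ) := by
          apply mul_le_mul_of_nonneg_left hexp (by positivity)
      _ = (2 * (N:ℝ) ^ (-2 / 3 - α - 19 * s / 2 : ℝ) / K ^ 4) / 32 := by ring
      _ ≤ ((1 - E.δ 2) * ((E.lam 1)⁻¹ - (E.lam 2)⁻¹) * (E.δ 2 ^ t * ell) * E.ν 2) / 32 := by
          rw [← hXeq]
          linarith [hgprod4]
      _ ≤ p / 32 := by linarith [hm2]
      _ = (p / 2) / 16 := by ring
      _ ≤ (p * (b0 * b1) - a0 * (q0 * b1 + b0 * q1)) / (b0 * b1) ^ 2 :=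
          div_le_div₀ (by linarith [hnum, hpnn]) hnum hdenpos hdensq
  rw [hderiv, hp'rel, hq0'rel, hq1'rel]
  calc 1 / (16 * K ^ 4) * (N:ℝ) ^ (-11 * s - 2 / 3 - α : ℝ)
      ≤ (p * (b0 * b1) - a0 * (q0 * b1 + b0 * q1)) / (b0 * b1) ^ 2 := hfinal
    _ = -((-p * (b0 * b1) - a0 * (-q0 * b1 + b0 * -q1)) / (b0 * b1) ^ 2) := by ring
end

section
/- Let 0 < σ < 1/3, α ≥ 10/3 + σ, 0 < s < σ/40, and set ε = N^{−α/2}. There exists N₀ ∈ ℕ such that for all N ≥ N₀ and every eigen-data configuration of size N satisfying Condition R(N,s): (α − 4/3 − 4s)·log N/log δ₂^{−1} ≤ T*_{IP,ε} ≤ (α − 4/3 + 4s)·log N/log δ₂^{−1}; in particular T*_{IP,ε} lies in the interval L̂_α = [(α − 4/3 − 5s) log N/log δ₂^{−1}, (α − 4/3 + 6s) log N/log δ₂^{−1}]. -/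
open Finset MeasureTheory
open scoped Classical

noncomputable section

namespace MPAux

variable {d : ℝ}

/-- left edge -/
def lm (d : ℝ) : ℝ := (1 - Real.sqrt d) ^ 2
/-- right edge -/
def lp (d : ℝ) : ℝ := (1 + Real.sqrt d) ^ 2

lemma sqrtd_lt_one (hd0 : 0 < d) (hd1 : d < 1) : Real.sqrt d < 1 := by
  have := Real.sqrt_lt_sqrt hd0.le hd1
  simpa using this

lemma lm_pos (hd0 : 0 < d) (hd1 : d < 1) : 0 < lm d := by
  have h := sqrtd_lt_one hd0 hd1
  have : (0:ℝ) < 1 - Real.sqrt d := by linarith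
  exact pow_pos this 2

lemma lm_le_lp : lm d ≤ lp d := by
  have h := Real.sqrt_nonneg d
  unfold lm lp; nlinarith

lemma lp_pos : 0 < lp d := by
  have h := Real.sqrt_nonneg d
  unfold lp; nlinarith

lemma lm_le_one (hd0 : 0 < d) (hd1 : d < 1) : lm d ≤ 1 := by
  have h0 := Real.sqrt_nonneg d
  have h1 := sqrtd_lt_one hd0 hd1
  unfold lm; nlinarith

lemma lm_add (hd0 : 0 < d) : lm d + 2 * Real.sqrt d = 1 + d := by
  have h : Real.sqrt d ^ 2 = d := Real.sq_sqrt hd0.le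
  unfold lm; nlinarith [h]

lemma lp_eq (hd0 : 0 < d) : lp d = 1 + d + 2 * Real.sqrt d := by
  have h : Real.sqrt d ^ 2 = d := Real.sq_sqrt hd0.le
  unfold lp; nlinarith [h]

lemma mp_nonneg (hd0 : 0 < d) (x : ℝ) : 0 ≤ mpDensity d x := by
  unfold mpDensity
  split_ifs with h
  · have hpi := Real.pi_pos
    have h1 : (0:ℝ) ≤ 1 / (2 * Real.pi * d) := by positivity
    exact div_nonneg (mul_nonneg h1 (Real.sqrt_nonneg _)) h.le
  · exact le_refl 0

lemma mp_zero {x : ℝ} (hx : x ≤ lm d ∨ lp d ≤ x) : mpDensity d x = 0 := by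
  have hs := Real.sqrt_nonneg d
  unfold mpDensity
  split_ifs with h
  · have hP : ((1 + Real.sqrt d) ^ 2 - x) * (x - (1 - Real.sqrt d) ^ 2) ≤ 0 := by
      rcases hx with hx | hx
      · have h1 : x - (1 - Real.sqrt d) ^ 2 ≤ 0 := by unfold lm at hx; linarith
        have h2 : 0 ≤ (1 + Real.sqrt d) ^ 2 - x := by
          have := lm_le_lp (d := d); unfold lm lp at *; linarith
        exact mul_nonpos_of_nonneg_of_nonpos h2 h1
      · have h1 : (1 + Real.sqrt d) ^ 2 - x ≤ 0 := by unfold lp at hx; linarith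
        have h2 : 0 ≤ x - (1 - Real.sqrt d) ^ 2 := by
          have := lm_le_lp (d := d); unfold lm lp at *; linarith
        exact mul_nonpos_of_nonpos_of_nonneg h1 h2
    rw [max_eq_right hP, Real.sqrt_zero, mul_zero, zero_div]
  · rfl

lemma mp_meas : Measurable (mpDensity d) := by
  unfold mpDensity
  apply Measurable.ite (measurableSet_lt measurable_const measurable_id)
  · have hc : Continuous fun x : ℝ => (1 / (2 * Real.pi * d)) *
        Real.sqrt (max (((1 + Real.sqrt d) ^ 2 - x) * (x - (1 - Real.sqrt d) ^ 2)) 0) := by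
      apply Continuous.mul continuous_const
      apply Real.continuous_sqrt.comp
      exact ((continuous_const.sub continuous_id).mul
        (continuous_id.sub continuous_const)).max continuous_const
    exact hc.measurable.div measurable_id
  · exact measurable_const

lemma mp_le (hd0 : 0 < d) (hd1 : d < 1) (x : ℝ) :
    mpDensity d x ≤ 1 / (2 * Real.pi * d) * lp d / lm d := by
  have hpi := Real.pi_pos
  have hlm := lm_pos hd0 hd1
  have hlp := lp_pos (d := d)
  rcases le_or_gt x (lm d) with h | h
  · rw [mp_zero (Or.inl h)]; positivity
  · unfold mpDensity
    split_ifs with h0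
    · have hs := Real.sqrt_nonneg d
      have hd' : Real.sqrt d ^ 2 = d := Real.sq_sqrt hd0.le
      have hmax : max (((1 + Real.sqrt d) ^ 2 - x) * (x - (1 - Real.sqrt d) ^ 2)) 0
          ≤ (lp d) ^ 2 := by
        apply max_le _ (by positivity)
        unfold lp
        nlinarith [sq_nonneg (((1 + Real.sqrt d) ^ 2 - x) - (x - (1 - Real.sqrt d) ^ 2)),
          sqrtd_lt_one hd0 hd1]
      have hsq : Real.sqrt (max (((1 + Real.sqrt d) ^ 2 - x) * (x - (1 - Real.sqrt d) ^ 2)) 0)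
          ≤ lp d := by
        calc Real.sqrt _ ≤ Real.sqrt ((lp d) ^ 2) := Real.sqrt_le_sqrt hmax
        _ = lp d := Real.sqrt_sq hlp.le
      apply div_le_div₀ (by positivity)
        (by
          have h1 : (0:ℝ) ≤ 1 / (2 * Real.pi * d) := by positivity
          exact mul_le_mul_of_nonneg_left hsq h1)
        hlm h.le
    · exact absurd (hlm.trans h) h0

/-- the CDF -/
def F (d t : ℝ) : ℝ := ∫ x in Set.Iic t, mpDensity d x

lemma mp_integrable (hd0 : 0 < d) (hd1 : d < 1) : Integrable (mpDensity d) := by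
  have heq : mpDensity d = (Set.Icc (lm d) (lp d)).indicator (mpDensity d) := by
    funext x
    rw [Set.indicator]
    split_ifs with h
    · rfl
    · rw [Set.mem_Icc, not_and_or] at h
      refine mp_zero ?_
      rcases h with h | h
      · exact Or.inl (le_of_not_ge h)
      · exact Or.inr (le_of_not_ge h)
  rw [heq, integrable_indicator_iff measurableSet_Icc]
  apply Measure.integrableOn_of_bounded (M := 1 / (2 * Real.pi * d) * lp d / lm d)
    (by rw [Real.volume_Icc]; exact ENNReal.ofReal_ne_top) mp_meas.aestronglyMeasurable
  filter_upwards with x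
  rw [Real.norm_eq_abs, abs_of_nonneg (mp_nonneg hd0 x)]
  exact mp_le hd0 hd1 x

lemma F_zero (hd0 : 0 < d) {t : ℝ} (ht : t ≤ lm d) : F d t = 0 := by
  unfold F
  rw [setIntegral_congr_fun measurableSet_Iic
    (fun x hx => mp_zero (Or.inl ((Set.mem_Iic.1 hx).trans ht)) : Set.EqOn _ (fun _ => (0:ℝ)) _)]
  simp

lemma F_cont (hd0 : 0 < d) (hd1 : d < 1) : Continuous (F d) := by
  have hint := mp_integrable hd0 hd1
  have heq : F d = fun t => (∫ x in Set.Iic (lm d), mpDensity d x)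
      + ∫ x in (lm d)..t, mpDensity d x := by
    funext t
    have h := intervalIntegral.integral_Iic_sub_Iic (hint.integrableOn) (hint.integrableOn)
      (a := lm d) (b := t)
    unfold F
    linarith
  rw [heq]
  exact continuous_const.add (hint.continuous_primitive (lm d))

/-- Lower bound for `F` at `1 + d`. -/
lemma F_lb (hd0 : 0 < d) (hd1 : d < 1) :
    1 / (2 * Real.pi * d) * Real.sqrt (2 * d) / lp d * Real.sqrt d ≤ F d (1 + d) := by
  have hpi := Real.pi_pos
  have hs := Real.sqrt_nonneg d
  have hsp : 0 < Real.sqrt d := Real.sqrt_pos.2 hd0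
  have hd' : Real.sqrt d ^ 2 = d := Real.sq_sqrt hd0.le
  have hlm := lm_pos hd0 hd1
  have hlp := lp_pos (d := d)
  set a := lm d + Real.sqrt d with ha
  set b := (1 : ℝ) + d with hb
  have hab : b - a = Real.sqrt d := by
    rw [ha, hb, ← lm_add hd0]; ring
  have hab' : a ≤ b := by nlinarith
  set c₀ : ℝ := 1 / (2 * Real.pi * d) * Real.sqrt (2 * d) / lp d with hc₀
  have hint := mp_integrable hd0 hd1
  have hpt : ∀ x ∈ Set.Icc a b, c₀ ≤ mpDensity d x := by
    intro x hx
    obtain ⟨hx1, hx2⟩ := hx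
    have hx0 : 0 < x := by nlinarith
    rw [mpDensity, if_pos hx0]
    have hxlp : x ≤ lp d := by rw [lp_eq hd0]; nlinarith
    have hP : 2 * d ≤ ((1 + Real.sqrt d) ^ 2 - x) * (x - (1 - Real.sqrt d) ^ 2) := by
      have h1 : 2 * Real.sqrt d ≤ (1 + Real.sqrt d) ^ 2 - x := by
        have := lp_eq hd0; unfold lp at this; nlinarith
      have h2 : Real.sqrt d ≤ x - (1 - Real.sqrt d) ^ 2 := by
        unfold lm at ha; nlinarith
      nlinarith
    have hPmax : 2 * d ≤ max (((1 + Real.sqrt d) ^ 2 - x) * (x - (1 - Real.sqrt d) ^ 2)) 0 :=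
      hP.trans (le_max_left _ _)
    have hsq : Real.sqrt (2 * d) ≤
        Real.sqrt (max (((1 + Real.sqrt d) ^ 2 - x) * (x - (1 - Real.sqrt d) ^ 2)) 0) :=
      Real.sqrt_le_sqrt hPmax
    rw [hc₀]
    apply div_le_div₀ (by positivity)
      (mul_le_mul_of_nonneg_left hsq (by positivity)) hx0 hxlp
  have h1 : c₀ * Real.sqrt d ≤ ∫ x in Set.Icc a b, mpDensity d x := by
    have hconst : (∫ _x in Set.Icc a b, c₀) = c₀ * Real.sqrt d := by
      rw [setIntegral_const, measureReal_def, Real.volume_Icc, smul_eq_mul,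
        ENNReal.toReal_ofReal (by linarith : (0:ℝ) ≤ b - a), hab, mul_comm]
    rw [← hconst]
    exact setIntegral_mono_on (integrableOn_const (by rw [Real.volume_Icc]; exact ENNReal.ofReal_ne_top))
      hint.integrableOn measurableSet_Icc hpt
  have h2 : (∫ x in Set.Icc a b, mpDensity d x) ≤ F d (1 + d) := by
    apply setIntegral_mono_set hint.integrableOn
      (Filter.Eventually.of_forall (mp_nonneg hd0))
    apply HasSubset.Subset.eventuallyLE
    intro x hx
    exact hx.2
  linarith

lemma quantile_mem (hd0 : 0 < d) (hd1 : d < 1) {N n : ℕ} (hn : 0 < n) (hN : 0 < N)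
    (h : (n : ℝ) / N ≤ F d (1 + d)) : mpQuantile d N n ∈ Set.Icc (lm d) (1 + d) := by
  have hq : (n : ℝ) / N ∈ Set.Icc (F d (lm d)) (F d (1 + d)) := by
    constructor
    · rw [F_zero hd0 le_rfl]; positivity
    · exact h
  have hlm1 : lm d ≤ 1 + d := by have := lm_le_one hd0 hd1; linarith
  obtain ⟨t, ht, hFt⟩ := intermediate_value_Icc hlm1 (F_cont hd0 hd1).continuousOn hq
  have hnN : (0:ℝ) < (n : ℝ) / N := by positivity
  have hlb : ∀ u ∈ {t : ℝ | (∫ x in Set.Iic t, mpDensity d x) = (n : ℝ) / N}, lm d ≤ u := by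
    intro u hu
    by_contra hc
    push_neg at hc
    have h0 : F d u = 0 := F_zero hd0 hc.le
    have h1 : F d u = (n : ℝ) / N := hu
    linarith
  constructor
  · exact le_csInf ⟨t, hFt⟩ hlb
  · exact (csInf_le ⟨lm d, hlb⟩ hFt).trans ht.2

end MPAux

end

set_option maxHeartbeats 1000000

/-- Bounds on `T*_{IP,ε}`: given Condition R(N,s),
`(α - 4/3 - 4s) log N / log δ₂⁻¹ ≤ T*_{IP,ε} ≤ (α - 4/3 + 4s) log N / log δ₂⁻¹`;
in particular `T*_{IP,ε} ∈ L̂_α`. -/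
theorem TstarIP_bounds (d σ α s : ℝ)
    (hd0 : 0 < d) (hd1 : d < 1)
    (hσ0 : 0 < σ) (hσ1 : σ < 1 / 3)
    (hα : 10 / 3 + σ ≤ α)
    (hs0 : 0 < s) (hs1 : s < σ / 40) :
    ∃ N₀ : ℕ, ∀ N : ℕ, N₀ ≤ N → ∀ E : EigenData N, E.CondR d s →
      ((α - 4 / 3 - 4 * s) * Real.log N / Real.log (E.δ 2)⁻¹ ≤ E.TstarIP α ∧
        E.TstarIP α ≤ (α - 4 / 3 + 4 * s) * Real.log N / Real.log (E.δ 2)⁻¹) ∧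
      E.TstarIP α ∈ Set.Icc ((α - 4 / 3 - 5 * s) * Real.log N / Real.log (E.δ 2)⁻¹)
        ((α - 4 / 3 + 6 * s) * Real.log N / Real.log (E.δ 2)⁻¹) := by
  have hpi := Real.pi_pos
  have hlm := MPAux.lm_pos hd0 hd1
  have hlp := MPAux.lp_pos (d := d)
  set cLo : ℝ := MPAux.lm d / 2 with hcLo
  set cHi : ℝ := 1 + d + MPAux.lm d with hcHi
  have hcLo0 : 0 < cLo := by rw [hcLo]; linarith only [hlm]
  have hcHi0 : 0 < cHi := by rw [hcHi]; linarith only [hd0, hlm]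
  set K : ℝ := 2 * |Real.log cLo| + 3 * |Real.log cHi| + |Real.log (2 / cLo)| + 1 with hK
  set Fm : ℝ := 1 / (2 * Real.pi * d) * Real.sqrt (2 * d) / MPAux.lp d * Real.sqrt d with hFm
  have hFm0 : 0 < Fm := by
    rw [hFm]
    have h1 : 0 < Real.sqrt (2 * d) := Real.sqrt_pos.2 (by linarith)
    have h2 : 0 < Real.sqrt d := Real.sqrt_pos.2 hd0
    positivity
  clear_value cLo cHi K Fm
  have e1 : ∀ᶠ N : ℕ in Filter.atTop, 3 ≤ N := Filter.eventually_ge_atTop 3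
  have e2 : ∀ᶠ N : ℕ in Filter.atTop, (2 : ℝ) / N ≤ Fm :=
    (tendsto_const_div_atTop_nhds_zero_nat 2).eventually_le_const hFm0
  have e3 : ∀ᶠ N : ℕ in Filter.atTop, (N : ℝ) ^ (-2 / 3 + s / 2 : ℝ) ≤ cLo := by
    have h : Filter.Tendsto (fun x : ℝ => x ^ (-(2 / 3 - s / 2)) : ℝ → ℝ)
        Filter.atTop (nhds 0) := tendsto_rpow_neg_atTop (by linarith only [hs1, hσ1])
    have h2 := h.comp tendsto_natCast_atTop_atTop
    have hexp : (-2 / 3 + s / 2 : ℝ) = -(2 / 3 - s / 2) := by ring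
    have h3 : Filter.Tendsto (fun N : ℕ => (N : ℝ) ^ (-2 / 3 + s / 2 : ℝ))
        Filter.atTop (nhds 0) := by rw [hexp]; exact h2
    exact h3.eventually_le_const hcLo0
  have e4 : ∀ᶠ N : ℕ in Filter.atTop, K ≤ s * Real.log N := by
    have h : Filter.Tendsto (fun N : ℕ => s * Real.log N) Filter.atTop Filter.atTop :=
      (Real.tendsto_log_atTop.comp tendsto_natCast_atTop_atTop).const_mul_atTop hs0
    exact h.eventually_ge_atTop K
  obtain ⟨N₀, hN₀⟩ := Filter.eventually_atTop.1 (((e1.and e2).and e3).and e4)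
  refine ⟨N₀, fun N hN E hR => ?_⟩
  obtain ⟨⟨⟨hN3, hFle⟩, hNe⟩, hKs⟩ := hN₀ N hN
  have hN1 : 1 ≤ N := by omega
  have hN0R : (0 : ℝ) < N := by exact_mod_cast (by omega : 0 < N)
  have hlogN : (0 : ℝ) ≤ Real.log N := Real.log_nonneg (by exact_mod_cast hN1)
  obtain ⟨hi, hii, hiii, hiv, hv⟩ := hR
  -- gap bounds
  obtain ⟨hΔlo, hΔhi⟩ := hiv 2 (Set.mem_insert _ _)
  have hΔpos : 0 < E.lam 2 - E.lam 1 :=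
    lt_of_lt_of_le (Real.rpow_pos_of_pos hN0R _) hΔlo
  -- quantile bound for n = 1
  have hFlb := MPAux.F_lb hd0 hd1
  have h12 : (1 : ℝ) / N ≤ 2 / N := (div_le_div_iff_of_pos_right hN0R).2 one_le_two
  have hq1 := MPAux.quantile_mem hd0 hd1 (N := N) (n := 1) one_pos (by omega)
    (by push_cast; rw [← hFm] at hFlb; linarith only [h12, hFle, hFlb])
  obtain ⟨hγlo, hγhi⟩ := hq1
  -- rigidity at n = 1
  have hv1 := hv 1 (Finset.mem_Icc.2 ⟨le_rfl, hN1⟩)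
  have hmin : min 1 (N - 1 + 1) = 1 := by omega
  rw [hmin] at hv1
  have hv1' : |E.lam 1 - mpQuantile d N 1| ≤ (N : ℝ) ^ (-2 / 3 + s / 2 : ℝ) := by
    simpa [Real.one_rpow] using hv1
  obtain ⟨habs1, habs2⟩ := abs_le.1 hv1'
  -- eigenvalue bounds
  have hL1lo : cLo ≤ E.lam 1 := by
    rw [hcLo]
    rw [hcLo] at hNe
    linarith only [hγlo, habs1, hNe]
  have hL1hi : E.lam 1 ≤ 1 + d + cLo := by
    rw [hcLo] at hNe ⊢
    linarith only [hγhi, habs2, hNe]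
  have hL2hi : E.lam 2 ≤ cHi := by
    rw [hcHi]
    rw [hcLo] at hL1hi hNe
    linarith only [hL1hi, hΔhi, hNe]
  have hL2lo : cLo ≤ E.lam 2 := by linarith only [hL1lo, hΔpos]
  have hL1pos : 0 < E.lam 1 := hcLo0.trans_le hL1lo
  have hL2pos : 0 < E.lam 2 := hcLo0.trans_le hL2lo
  have hL12 : E.lam 1 < E.lam 2 := by linarith only [hΔpos]
  -- sqrt of δ₂
  have hδeq : E.δ 2 = (E.lam 1 / E.lam 2) ^ 2 := by rw [EigenData.δ, div_pow]
  have hsqrt : E.δ 2 ^ ((1 : ℝ) / 2) = E.lam 1 / E.lam 2 := by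
    rw [hδeq, ← Real.rpow_natCast (E.lam 1 / E.lam 2) 2, ← Real.rpow_mul (by positivity)]
    have : ((2 : ℕ) : ℝ) * (1 / 2) = 1 := by norm_num
    rw [this, Real.rpow_one]
  have h1m : 1 - E.lam 1 / E.lam 2 = (E.lam 2 - E.lam 1) / E.lam 2 := by field_simp
  have hlog1m : Real.log (1 - E.δ 2 ^ ((1 : ℝ) / 2)) =
      Real.log (E.lam 2 - E.lam 1) - Real.log (E.lam 2) := by
    rw [hsqrt, h1m, Real.log_div (ne_of_gt hΔpos) (ne_of_gt hL2pos)]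
  -- log gap bounds
  have hlogΔhi : Real.log (E.lam 2 - E.lam 1) ≤ (-2 / 3 + s / 2) * Real.log N :=
    (Real.log_le_log hΔpos hΔhi).trans_eq (Real.log_rpow hN0R _)
  have hlogΔlo : (-2 / 3 - s / 2) * Real.log N ≤ Real.log (E.lam 2 - E.lam 1) :=
    (Real.log_rpow hN0R _).symm.trans_le
      (Real.log_le_log (Real.rpow_pos_of_pos hN0R _) hΔlo)
  -- ν bounds
  have hb2hi := hi 2 (Finset.mem_Icc.2 ⟨by omega, by omega⟩)
  have hb1hi := hi 1 (Finset.mem_Icc.2 ⟨le_rfl, hN1⟩)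
  have hb2lo := hii 2 (by simp)
  have hb1lo := hii 1 (by simp)
  have hbpos : (0 : ℝ) < (N : ℝ) ^ (-1 / 2 - s / 2 : ℝ) := Real.rpow_pos_of_pos hN0R _
  have hbpos' : (0 : ℝ) < (N : ℝ) ^ (-1 / 2 + s / 2 : ℝ) := Real.rpow_pos_of_pos hN0R _
  have hb1pos : 0 < E.beta 1 := E.beta_one_pos
  have hb2pos : 0 < E.beta 2 := lt_of_lt_of_le hbpos hb2lo
  have hν : E.ν 2 ≤ (N : ℝ) ^ (2 * s : ℝ) := by
    rw [EigenData.ν]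
    have h1 : E.beta 2 ^ 2 ≤ ((N : ℝ) ^ (-1 / 2 + s / 2 : ℝ)) ^ 2 :=
      pow_le_pow_left₀ hb2pos.le hb2hi 2
    have h2 : ((N : ℝ) ^ (-1 / 2 - s / 2 : ℝ)) ^ 2 ≤ E.beta 1 ^ 2 :=
      pow_le_pow_left₀ hbpos.le hb1lo 2
    have key : E.beta 2 ^ 2 / E.beta 1 ^ 2 ≤
        ((N : ℝ) ^ (-1 / 2 + s / 2 : ℝ)) ^ 2 / ((N : ℝ) ^ (-1 / 2 - s / 2 : ℝ)) ^ 2 :=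
      div_le_div₀ (by positivity) h1 (by positivity) h2
    refine key.trans (le_of_eq ?_)
    rw [← Real.rpow_natCast ((N : ℝ) ^ (-1 / 2 + s / 2 : ℝ)) 2,
      ← Real.rpow_natCast ((N : ℝ) ^ (-1 / 2 - s / 2 : ℝ)) 2,
      ← Real.rpow_mul hN0R.le, ← Real.rpow_mul hN0R.le, ← Real.rpow_sub hN0R]
    congr 1
    push_cast
    ring
  have hν' : (N : ℝ) ^ (-(2 * s) : ℝ) ≤ E.ν 2 := by
    rw [EigenData.ν]
    have h1 : ((N : ℝ) ^ (-1 / 2 - s / 2 : ℝ)) ^ 2 ≤ E.beta 2 ^ 2 :=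
      pow_le_pow_left₀ hbpos.le hb2lo 2
    have h2 : E.beta 1 ^ 2 ≤ ((N : ℝ) ^ (-1 / 2 + s / 2 : ℝ)) ^ 2 :=
      pow_le_pow_left₀ hb1pos.le hb1hi 2
    have key : ((N : ℝ) ^ (-1 / 2 - s / 2 : ℝ)) ^ 2 / ((N : ℝ) ^ (-1 / 2 + s / 2 : ℝ)) ^ 2 ≤
        E.beta 2 ^ 2 / E.beta 1 ^ 2 :=
      div_le_div₀ (by positivity) h1 (by positivity) h2
    refine (le_of_eq ?_).trans key
    rw [← Real.rpow_natCast ((N : ℝ) ^ (-1 / 2 + s / 2 : ℝ)) 2,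
      ← Real.rpow_natCast ((N : ℝ) ^ (-1 / 2 - s / 2 : ℝ)) 2,
      ← Real.rpow_mul hN0R.le, ← Real.rpow_mul hN0R.le, ← Real.rpow_sub hN0R]
    congr 1
    push_cast
    ring
  have hνpos : 0 < E.ν 2 := by rw [EigenData.ν]; positivity
  have hlogνhi : Real.log (E.ν 2) ≤ 2 * s * Real.log N :=
    (Real.log_le_log hνpos hν).trans_eq (Real.log_rpow hN0R _)
  have hlogνlo : -(2 * s) * Real.log N ≤ Real.log (E.ν 2) :=
    (Real.log_rpow hN0R _).symm.trans_le
      (Real.log_le_log (Real.rpow_pos_of_pos hN0R _) hν')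
  -- sum of inverses bounds
  have hSpos : 0 < (E.lam 2)⁻¹ + (E.lam 1)⁻¹ := by positivity
  have hSlo : cHi⁻¹ ≤ (E.lam 2)⁻¹ + (E.lam 1)⁻¹ := by
    have h1 : cHi⁻¹ ≤ (E.lam 2)⁻¹ := inv_anti₀ hL2pos hL2hi
    have h2 : (0 : ℝ) ≤ (E.lam 1)⁻¹ := by positivity
    linarith only [h1, h2]
  have hShi : (E.lam 2)⁻¹ + (E.lam 1)⁻¹ ≤ 2 / cLo := by
    have h1 : (E.lam 1)⁻¹ ≤ cLo⁻¹ := inv_anti₀ hcLo0 hL1lo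
    have h2 : (E.lam 2)⁻¹ ≤ cLo⁻¹ := inv_anti₀ hcLo0 hL2lo
    have h3 : 2 / cLo = cLo⁻¹ + cLo⁻¹ := by rw [div_eq_mul_inv]; ring
    linarith only [h1, h2, h3]
  have hlogShi : Real.log ((E.lam 2)⁻¹ + (E.lam 1)⁻¹) ≤ |Real.log (2 / cLo)| :=
    (Real.log_le_log hSpos hShi).trans (le_abs_self _)
  have hlogSlo : -|Real.log cHi| ≤ Real.log ((E.lam 2)⁻¹ + (E.lam 1)⁻¹) := by
    have h1 := Real.log_le_log (by positivity : (0:ℝ) < cHi⁻¹) hSlo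
    rw [Real.log_inv] at h1
    have h2 : -|Real.log cHi| ≤ -Real.log cHi := neg_le_neg (le_abs_self _)
    linarith only [h1, h2]
  -- log L2 bounds
  have hlogL2hi : Real.log (E.lam 2) ≤ |Real.log cHi| :=
    (Real.log_le_log hL2pos hL2hi).trans (le_abs_self _)
  have hlogL2lo : -|Real.log cLo| ≤ Real.log (E.lam 2) := by
    have h1 := Real.log_le_log hcLo0 hL2lo
    linarith only [h1, neg_abs_le (Real.log cLo)]
  -- numerator bounds
  have hKexp : 2 * |Real.log cLo| + |Real.log (2 / cLo)| ≤ K := by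
    rw [hK]; linarith only [abs_nonneg (Real.log cHi)]
  have hKexp' : 3 * |Real.log cHi| ≤ K := by
    rw [hK]; linarith only [abs_nonneg (Real.log cLo), abs_nonneg (Real.log (2 / cLo))]
  have hBhi : α * Real.log N + 2 * Real.log (1 - E.δ 2 ^ ((1 : ℝ) / 2)) +
      Real.log ((E.lam 2)⁻¹ + (E.lam 1)⁻¹) + Real.log (E.ν 2) ≤
      (α - 4 / 3 + 4 * s) * Real.log N := by
    rw [hlog1m]
    linarith only [hlogΔhi, hlogL2lo, hlogShi, hlogνhi, hKs, hKexp]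
  have hBlo : (α - 4 / 3 - 4 * s) * Real.log N ≤
      α * Real.log N + 2 * Real.log (1 - E.δ 2 ^ ((1 : ℝ) / 2)) +
      Real.log ((E.lam 2)⁻¹ + (E.lam 1)⁻¹) + Real.log (E.ν 2) := by
    rw [hlog1m]
    linarith only [hlogΔlo, hlogL2hi, hlogSlo, hlogνlo, hKs, hKexp']
  -- denominator positive
  have hδpos : 0 < E.δ 2 := by rw [EigenData.δ]; positivity
  have hδlt1 : E.δ 2 < 1 := by
    rw [hδeq]
    have h1 : E.lam 1 / E.lam 2 < 1 := (div_lt_one hL2pos).2 hL12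
    have h2 : 0 ≤ E.lam 1 / E.lam 2 := by positivity
    calc (E.lam 1 / E.lam 2) ^ 2 ≤ (E.lam 1 / E.lam 2) * 1 := by nlinarith only [h1, h2]
    _ < 1 := by linarith only [h1]
  have hLg : 0 < Real.log (E.δ 2)⁻¹ := by
    rw [Real.log_inv]
    linarith only [Real.log_neg hδpos hδlt1]
  have hT : E.TstarIP α = (α * Real.log N + 2 * Real.log (1 - E.δ 2 ^ ((1 : ℝ) / 2)) +
      Real.log ((E.lam 2)⁻¹ + (E.lam 1)⁻¹) + Real.log (E.ν 2)) / Real.log (E.δ 2)⁻¹ := rfl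
  have hmain1 : (α - 4 / 3 - 4 * s) * Real.log N / Real.log (E.δ 2)⁻¹ ≤ E.TstarIP α := by
    rw [hT]; exact (div_le_div_iff_of_pos_right hLg).2 hBlo
  have hmain2 : E.TstarIP α ≤ (α - 4 / 3 + 4 * s) * Real.log N / Real.log (E.δ 2)⁻¹ := by
    rw [hT]; exact (div_le_div_iff_of_pos_right hLg).2 hBhi
  have hsl : 0 ≤ s * Real.log N := mul_nonneg hs0.le hlogN
  refine ⟨⟨hmain1, hmain2⟩, ?_, ?_⟩
  · refine le_trans ?_ hmain1
    apply (div_le_div_iff_of_pos_right hLg).2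
    linarith only [hsl]
  · refine hmain2.trans ?_
    apply (div_le_div_iff_of_pos_right hLg).2
    linarith only [hsl]
end
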